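/- arXiv:1912.05871 — 5 statements merged into one kernel-verified Lean document; each statement's English description precedes it below -/
import Mathlib

section
/- Let G be a finite simple connected graph and let u, v be two distinct non-adjacent vertices of G. Then the connective eccentricity index strictly increases upon adding the edge uv: ξ^ce(G) < ξ^ce(G + uv). -/
open Finset
open scoped Classical

namespace CEI

variable {V : Type*}

/-- Degree of a vertex. -/
noncomputable def deg [Fintype V] (G : SimpleGraph V) (v : V) : ℕ :=
  (Finset.univ.filter fun u => G.Adj v u).card

/-- Eccentricity of a vertex. -/
noncomputable def ecc [Fintype V] (G : SimpleGraph V) (v : V) : ℕ :=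
  Finset.univ.sup fun u => G.dist v u

/-- Connective eccentricity index. -/
noncomputable def cei [Fintype V] (G : SimpleGraph V) : ℝ :=
  ∑ v : V, (deg G v : ℝ) / (ecc G v)

/-- Diameter. -/
noncomputable def diam [Fintype V] (G : SimpleGraph V) : ℕ :=
  Finset.univ.sup fun v => ecc G v

/-- `G` is `k`-connected: removing fewer than `k` vertices leaves a
connected graph with more than one vertex. -/
def KConnected [Fintype V] (k : ℕ) (G : SimpleGraph V) : Prop :=
  ∀ A : Finset V, A.card < k →
    (G.induce ((A : Set V)ᶜ)).Connected ∧ 1 < ((A : Set V)ᶜ).ncard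

/-- A set of pairwise non-adjacent vertices. -/
def IsIndepSet (G : SimpleGraph V) (s : Set V) : Prop :=
  s.Pairwise fun u v => ¬ G.Adj u v

/-- Independence number. -/
noncomputable def indepNum [Fintype V] (G : SimpleGraph V) : ℕ :=
  Finset.univ.sup fun s : Finset V => if IsIndepSet G ↑s then s.card else 0

/-- A vertex cut: deleting `A` disconnects `G`. -/
def IsVertexCut (G : SimpleGraph V) (A : Finset V) : Prop :=
  ¬ (G.induce ((A : Set V)ᶜ)).Preconnected

/-- Sequential join of complete graphs with part sizes `cs`. -/
def seqCompleteJoin (cs : List ℕ) : SimpleGraph ((i : Fin cs.length) × Fin (cs.get i)) where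
  Adj x y := x ≠ y ∧ (x.1.val = y.1.val ∨ x.1.val + 1 = y.1.val ∨ y.1.val + 1 = x.1.val)
  symm := ⟨fun x y ⟨h1, h2⟩ => ⟨h1.symm, by tauto⟩⟩
  loopless := ⟨fun x ⟨h, _⟩ => h rfl⟩

/-- `K_k ∨ (K_a ∪ K_b)`. -/
def KJoin2 (k a b : ℕ) : SimpleGraph (Fin (k + a + b)) where
  Adj x y := x ≠ y ∧ (x.val < k ∨ y.val < k ∨ (x.val < k + a ↔ y.val < k + a))
  symm := ⟨fun x y ⟨h1, h2⟩ => ⟨h1.symm, by tauto⟩⟩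
  loopless := ⟨fun x ⟨h, _⟩ => h rfl⟩

/-- `K_b ∨ a K_1`. -/
def splitGraph (b a : ℕ) : SimpleGraph (Fin (b + a)) where
  Adj x y := x ≠ y ∧ (x.val < b ∨ y.val < b)
  symm := ⟨fun x y ⟨h1, h2⟩ => ⟨h1.symm, by tauto⟩⟩
  loopless := ⟨fun x ⟨h, _⟩ => h rfl⟩

/-- `S_{n,α} = K_k ∨ (K_1 ∪ (K_{n-k-α} ∨ (α-1)K_1))`; vertices `0,…,k-1` form the
clique `K_k` joined to everything, vertex `k` is the isolated-ish `K_1`, vertices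
`k+1,…,n-α` form `K_{n-k-α}`, and vertices `n-α+1,…,n-1` are the `α-1` independent ones. -/
def Sgraph (n k a : ℕ) : SimpleGraph (Fin n) where
  Adj x y := x ≠ y ∧ (x.val < k ∨ y.val < k ∨
    (x.val ≠ k ∧ y.val ≠ k ∧ ¬(n + 1 - a ≤ x.val ∧ n + 1 - a ≤ y.val)))
  symm := ⟨fun x y ⟨h1, h2⟩ => ⟨h1.symm, by tauto⟩⟩
  loopless := ⟨fun x ⟨h, _⟩ => h rfl⟩


private lemma dist_anti' {V : Type} {G H : SimpleGraph V} (h : G ≤ H) (a b : V)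
    (hr : G.Reachable a b) : H.dist a b ≤ G.dist a b := by
  obtain ⟨p, hp⟩ := hr.exists_walk_length_eq_dist
  calc H.dist a b ≤ (p.map (SimpleGraph.Hom.ofLE h)).length :=
        SimpleGraph.dist_le _
    _ = p.length := p.length_map _
    _ = G.dist a b := hp

/-- adding an edge between non-adjacent vertices of a connected
graph strictly increases the connective eccentricity index. -/
theorem cei_lt_cei_addEdge {V : Type} [Fintype V] (G : SimpleGraph V)
    (hconn : G.Connected) {u v : V} (hne : u ≠ v) (hadj : ¬ G.Adj u v) :
    cei G < cei (G ⊔ SimpleGraph.edge u v) := by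
  set H := G ⊔ SimpleGraph.edge u v with hH
  have hle : G ≤ H := le_sup_left
  have hHconn : H.Connected := SimpleGraph.Connected.mono hle hconn
  -- degrees
  have hdeg : ∀ w, deg G w ≤ deg H w := by
    intro w
    apply Finset.card_le_card
    intro x hx
    simp only [Finset.mem_filter, Finset.mem_univ, true_and] at hx ⊢
    exact hle hx
  have hdegu : deg G u < deg H u := by
    apply Finset.card_lt_card
    constructor
    · intro x hx
      simp only [Finset.mem_filter, Finset.mem_univ, true_and] at hx ⊢
      exact hle hx
    · intro hsub
      have hv : H.Adj u v := by
        simp only [hH, SimpleGraph.sup_adj, SimpleGraph.edge_adj]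
        tauto
      have h2 := hsub (by simp only [Finset.mem_filter, Finset.mem_univ, true_and]; exact hv)
      simp only [Finset.mem_filter, Finset.mem_univ, true_and] at h2
      exact hadj h2
  -- eccentricities
  have hecc : ∀ w, ecc H w ≤ ecc G w := by
    intro w
    apply Finset.sup_le
    intro x _
    exact le_trans (dist_anti' hle w x (hconn w x)) (Finset.le_sup (Finset.mem_univ x))
  have heccpos : ∀ w, 0 < ecc H w := by
    intro w
    rcases eq_or_ne w u with rfl | hwu
    · exact lt_of_lt_of_le (hHconn.pos_dist_of_ne hne) (Finset.le_sup (Finset.mem_univ v))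
    · exact lt_of_lt_of_le (hHconn.pos_dist_of_ne hwu)
        (Finset.le_sup (f := fun x => H.dist w x) (Finset.mem_univ u))
  -- combine
  unfold cei
  apply Finset.sum_lt_sum
  · intro w _
    apply div_le_div₀ (by positivity) (by exact_mod_cast hdeg w)
      (by exact_mod_cast heccpos w) (by exact_mod_cast hecc w)
  · refine ⟨u, Finset.mem_univ u, ?_⟩
    apply div_lt_div₀ (by exact_mod_cast hdegu) (by exact_mod_cast hecc u)
      (by positivity) (by exact_mod_cast heccpos u)
end CEI
end

section
/- Let k ≥ 1, let d ≥ 4 be even, and let n ≥ k(d-1)+2. If G is a graph attaining the maximum connective eccentricity index among all k-connected graphs of order n with diameter d, then G is isomorphic to the sequential join G(n,k,d) = K_1 ∨ K_k ∨ ⋯ ∨ K_k ∨ K_{n-kd+2k-2} ∨ K_k ∨ ⋯ ∨ K_k ∨ K_1, where on each side of the central clique K_{n-kd+2k-2} there are (d-2)/2 copies of K_k. -/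
open Finset
open scoped Classical

namespace CEI

variable {V : Type*}

/-- layers i and i' are equal or adjacent -/
def near (i i' : ℕ) : Prop := i = i' ∨ i + 1 = i' ∨ i' + 1 = i

lemma near_symm {i i'} (h : near i i') : near i' i := by unfold near at *; tauto

lemma near_refl (i : ℕ) : near i i := Or.inl rfl

/-- weight 1/max(i, d-i) -/
noncomputable def cc (d i : ℕ) : ℝ := 1 / ((max i (d - i) : ℕ) : ℝ)

lemma w_pos {d : ℕ} (hd : 4 ≤ d) (i : ℕ) : 0 < max i (d - i) := by omega

lemma cc_pos {d : ℕ} (hd : 4 ≤ d) (i : ℕ) : 0 < cc d i := by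
  have h := w_pos hd i
  have h2 : (0:ℝ) < ((max i (d - i) : ℕ) : ℝ) := by exact_mod_cast h
  exact div_pos one_pos h2

lemma cc_le_cc {d : ℕ} (hd : 4 ≤ d) {a b : ℕ} (h : max b (d - b) ≤ max a (d - a)) :
    cc d a ≤ cc d b := by
  have hb := w_pos hd b
  unfold cc
  apply one_div_le_one_div_of_le
  · exact_mod_cast hb
  · exact_mod_cast h

lemma cc_lt_cc {d : ℕ} (hd : 4 ≤ d) {a b : ℕ} (h : max b (d - b) < max a (d - a)) :
    cc d a < cc d b := by
  have hb := w_pos hd b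
  unfold cc
  apply one_div_lt_one_div_of_lt
  · exact_mod_cast hb
  · exact_mod_cast h

noncomputable def Bil (d : ℕ) (y z : ℕ → ℝ) : ℝ :=
  ∑ i ∈ range (d+1), ∑ i' ∈ range (d+1), if near i i' then cc d i * y i * z i' else 0

noncomputable def FR (d : ℕ) (x : ℕ → ℝ) : ℝ :=
  Bil d x x - ∑ i ∈ range (d+1), cc d i * x i

noncomputable def FF (d : ℕ) (x : ℕ → ℕ) : ℝ := FR d (fun i => (x i : ℝ))

/-- indicator vector -/
noncomputable def ev (t : ℕ) : ℕ → ℝ := fun i => if i = t then (1:ℝ) else 0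

lemma Bil_add_right (d : ℕ) (x z z' : ℕ → ℝ) :
    Bil d x (fun i => z i + z' i) = Bil d x z + Bil d x z' := by
  unfold Bil
  rw [← Finset.sum_add_distrib]
  refine Finset.sum_congr rfl fun i _ => ?_
  rw [← Finset.sum_add_distrib]
  refine Finset.sum_congr rfl fun i' _ => ?_
  split_ifs <;> ring

lemma Bil_add_left (d : ℕ) (y y' z : ℕ → ℝ) :
    Bil d (fun i => y i + y' i) z = Bil d y z + Bil d y' z := by
  unfold Bil
  rw [← Finset.sum_add_distrib]
  refine Finset.sum_congr rfl fun i _ => ?_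
  rw [← Finset.sum_add_distrib]
  refine Finset.sum_congr rfl fun i' _ => ?_
  split_ifs <;> ring

lemma Bil_sub_right (d : ℕ) (x z z' : ℕ → ℝ) :
    Bil d x (fun i => z i - z' i) = Bil d x z - Bil d x z' := by
  unfold Bil
  rw [← Finset.sum_sub_distrib]
  refine Finset.sum_congr rfl fun i _ => ?_
  rw [← Finset.sum_sub_distrib]
  refine Finset.sum_congr rfl fun i' _ => ?_
  split_ifs <;> ring

lemma Bil_sub_left (d : ℕ) (y y' z : ℕ → ℝ) :
    Bil d (fun i => y i - y' i) z = Bil d y z - Bil d y' z := by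
  unfold Bil
  rw [← Finset.sum_sub_distrib]
  refine Finset.sum_congr rfl fun i _ => ?_
  rw [← Finset.sum_sub_distrib]
  refine Finset.sum_congr rfl fun i' _ => ?_
  split_ifs <;> ring

/-- evaluation of the sum of a `near`-indicator -/
lemma sum_near (d : ℕ) (g : ℕ → ℝ) {t : ℕ} (ht : t ≤ d) :
    ∑ i ∈ range (d+1), (if near i t then g i else 0)
      = (if 1 ≤ t then g (t-1) else 0) + g t + (if t < d then g (t+1) else 0) := by
  have key : ∀ i, (if near i t then g i else 0)
      = ((if i + 1 = t then g i else 0) + (if i = t then g i else 0))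
        + (if i = t + 1 then g i else 0) := by
    intro i
    unfold near
    split_ifs <;> first | ring1 | (exfalso; omega)
  rw [Finset.sum_congr rfl (fun i _ => key i), Finset.sum_add_distrib,
    Finset.sum_add_distrib]
  have h1 : ∑ i ∈ range (d+1), (if i = t then g i else 0) = g t := by
    rw [Finset.sum_ite_eq' (range (d+1)) t g, if_pos (mem_range.mpr (by omega))]
  have h3 : ∑ i ∈ range (d+1), (if i = t+1 then g i else 0) = if t < d then g (t+1) else 0 := by
    rw [Finset.sum_ite_eq' (range (d+1)) (t+1) g]
    by_cases h : t < d
    · rw [if_pos (mem_range.mpr (by omega)), if_pos h]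
    · rw [if_neg (fun hc => h (by have := mem_range.mp hc; omega)), if_neg h]
  have h2 : ∑ i ∈ range (d+1), (if i + 1 = t then g i else 0) = if 1 ≤ t then g (t-1) else 0 := by
    by_cases h : 1 ≤ t
    · have e : ∀ i, (if i + 1 = t then g i else 0) = (if i = t - 1 then g i else 0) := by
        intro i; split_ifs <;> first | rfl | (exfalso; omega)
      rw [Finset.sum_congr rfl fun i _ => e i, Finset.sum_ite_eq' _ _ g,
          if_pos (mem_range.mpr (by omega)), if_pos h]
    · have e : ∀ i, (if i + 1 = t then g i else 0) = 0 := fun i => if_neg (by omega)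
      rw [Finset.sum_congr rfl fun i _ => e i, Finset.sum_const_zero, if_neg h]
  rw [h1, h2, h3]

lemma Bil_ev_right (d : ℕ) (x : ℕ → ℝ) {t : ℕ} (ht : t ≤ d) :
    Bil d x (ev t) = (if 1 ≤ t then cc d (t-1) * x (t-1) else 0) + cc d t * x t
      + (if t < d then cc d (t+1) * x (t+1) else 0) := by
  unfold Bil
  have inner : ∀ i, (∑ i' ∈ range (d+1), if near i i' then cc d i * x i * ev t i' else 0)
      = (if near i t then cc d i * x i else 0) := by
    intro i
    have e : ∀ i', (if near i i' then cc d i * x i * ev t i' else 0)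
        = if i' = t then (if near i t then cc d i * x i else 0) else 0 := by
      intro i'
      simp only [ev]
      unfold near
      split_ifs <;> first | ring1 | (exfalso; omega)
    rw [Finset.sum_congr rfl fun i' _ => e i',
      Finset.sum_ite_eq' (range (d+1)) t (fun _ => if near i t then cc d i * x i else 0),
      if_pos (mem_range.mpr (by omega))]
  rw [Finset.sum_congr rfl fun i _ => inner i]
  exact sum_near d (fun i => cc d i * x i) ht

lemma Bil_ev_left (d : ℕ) (x : ℕ → ℝ) {t : ℕ} (ht : t ≤ d) :
    Bil d (ev t) x = cc d t * ((if 1 ≤ t then x (t-1) else 0) + x t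
      + (if t < d then x (t+1) else 0)) := by
  unfold Bil
  have inner : ∀ i, (∑ i' ∈ range (d+1), if near i i' then cc d i * ev t i * x i' else 0)
      = if i = t then (∑ i' ∈ range (d+1), if near i' t then cc d t * x i' else 0) else 0 := by
    intro i
    by_cases h : i = t
    · subst h
      rw [if_pos rfl]
      refine Finset.sum_congr rfl fun i' _ => ?_
      have hiff : near i i' ↔ near i' i := ⟨near_symm, near_symm⟩
      rw [if_congr hiff rfl rfl]
      simp [ev]
    · rw [if_neg h]
      apply Finset.sum_eq_zero
      intro i' _
      simp [ev, h]
  rw [Finset.sum_congr rfl fun i _ => inner i,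
    Finset.sum_ite_eq' (range (d+1)) t
      (fun _ => (∑ i' ∈ range (d+1), if near i' t then cc d t * x i' else 0)),
    if_pos (mem_range.mpr (by omega))]
  have : ∀ i', (if near i' t then cc d t * x i' else 0) = cc d t * (if near i' t then x i' else 0) := by
    intro i'; split_ifs <;> ring1
  rw [Finset.sum_congr rfl fun i' _ => this i', ← Finset.mul_sum, sum_near d x ht]

lemma Bil_ev_ev (d : ℕ) {s t : ℕ} (hs : s ≤ d) (ht : t ≤ d) :
    Bil d (ev s) (ev t) = if near s t then cc d s else 0 := by
  rw [Bil_ev_left d (ev t) hs]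
  simp only [ev]
  split_ifs <;> first | ring1 | (exfalso; unfold near at *; omega)

lemma sum_cc_ev (d : ℕ) {t : ℕ} (ht : t ≤ d) :
    ∑ i ∈ range (d+1), cc d i * ev t i = cc d t := by
  simp only [ev, mul_ite, mul_one, mul_zero]
  rw [Finset.sum_ite_eq' (range (d+1)) t (cc d), if_pos (mem_range.mpr (by omega))]

/-- move one unit of mass from layer `a` to layer `b` -/
def move (x : ℕ → ℕ) (a b : ℕ) : ℕ → ℕ :=
  fun i => if i = a then x a - 1 else if i = b then x b + 1 else x i

lemma cast_move (x : ℕ → ℕ) {a b : ℕ} (hne : a ≠ b) (hxa : 1 ≤ x a) :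
    (fun i => ((move x a b i : ℕ) : ℝ))
      = fun i => ((x i : ℝ) + (ev b i - ev a i)) := by
  funext i
  simp only [move, ev]
  by_cases h1 : i = a
  · subst h1
    rw [if_pos rfl, if_neg hne, if_pos rfl, Nat.cast_sub hxa]
    push_cast
    ring1
  · rw [if_neg h1]
    by_cases h2 : i = b
    · subst h2
      rw [if_pos rfl, if_pos rfl, if_neg (Ne.symm hne)]
      push_cast
      ring1
    · rw [if_neg h2, if_neg h2, if_neg h1]
      ring1

lemma move_diff (d : ℕ) (x : ℕ → ℕ) {a b : ℕ} (ha : a ≤ d) (hb : b ≤ d)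
    (hnear : near a b) (hne : a ≠ b) (hxa : 1 ≤ x a) :
    FF d (move x a b) - FF d x
      = (Bil d (fun i => (x i : ℝ)) (ev b) - Bil d (fun i => (x i : ℝ)) (ev a))
        + (Bil d (ev b) (fun i => (x i : ℝ)) - Bil d (ev a) (fun i => (x i : ℝ)))
        - (cc d b - cc d a) := by
  set X : ℕ → ℝ := fun i => (x i : ℝ) with hX
  have hBarg : (fun i => ((move x a b i : ℕ) : ℝ)) = fun i => X i + (ev b i - ev a i) :=
    cast_move x hne hxa
  unfold FF FR
  rw [hBarg]
  have h1 : Bil d (fun i => X i + (ev b i - ev a i)) (fun i => X i + (ev b i - ev a i))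
      = Bil d X X + (Bil d X (ev b) - Bil d X (ev a))
        + ((Bil d (ev b) X - Bil d (ev a) X)
          + ((Bil d (ev b) (ev b) - Bil d (ev a) (ev b))
            - (Bil d (ev b) (ev a) - Bil d (ev a) (ev a)))) := by
    rw [Bil_add_right d _ X (fun i => ev b i - ev a i),
        Bil_add_left d X (fun i => ev b i - ev a i) X,
        Bil_add_left d X (fun i => ev b i - ev a i) (fun i => ev b i - ev a i),
        Bil_sub_right d X (ev b) (ev a),
        Bil_sub_left d (ev b) (ev a) X,
        Bil_sub_left d (ev b) (ev a) (fun i => ev b i - ev a i),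
        Bil_sub_right d (ev b) (ev b) (ev a),
        Bil_sub_right d (ev a) (ev b) (ev a)]
    ring1
  have h2 : Bil d (ev b) (ev b) = cc d b := by
    rw [Bil_ev_ev d hb hb, if_pos (near_refl b)]
  have h3 : Bil d (ev a) (ev a) = cc d a := by
    rw [Bil_ev_ev d ha ha, if_pos (near_refl a)]
  have h4 : Bil d (ev a) (ev b) = cc d a := by
    rw [Bil_ev_ev d ha hb, if_pos hnear]
  have h5 : Bil d (ev b) (ev a) = cc d b := by
    rw [Bil_ev_ev d hb ha, if_pos (near_symm hnear)]
  have h6 : ∑ i ∈ range (d+1), cc d i * (X i + (ev b i - ev a i))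
      = (∑ i ∈ range (d+1), cc d i * X i) + (cc d b - cc d a) := by
    have e : ∀ i, cc d i * (X i + (ev b i - ev a i))
        = cc d i * X i + (cc d i * ev b i - cc d i * ev a i) := fun i => by ring1
    rw [Finset.sum_congr rfl fun i _ => e i, Finset.sum_add_distrib,
      Finset.sum_sub_distrib, sum_cc_ev d hb, sum_cc_ev d ha]
  rw [h1, h2, h3, h4, h5, h6]
  ring1

lemma right_move {d k : ℕ} (hd : 4 ≤ d) (hde : d % 2 = 0) (hk : 1 ≤ k) {j : ℕ}
    (hj1 : d/2 + 1 ≤ j) (hj2 : j ≤ d) (x : ℕ → ℕ)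
    (hxj : 1 ≤ x j) (hxj2 : k ≤ x (j-2)) (hxjp : x (j+1) ≤ k) (htop : j = d → x (j+1) = 0) :
    FF d x < FF d (move x j (j-1)) := by
  set X : ℕ → ℝ := fun i => (x i : ℝ) with hX
  have hne : j ≠ j - 1 := by omega
  have hb : j - 1 ≤ d := by omega
  have hnear : near j (j-1) := by unfold near; omega
  have diff := move_diff d x hj2 hb hnear hne hxj
  have e1 : j - 1 - 1 = j - 2 := by omega
  have e2 : j - 1 + 1 = j := by omega
  have B1 : Bil d X (ev (j-1))
      = cc d (j-2) * X (j-2) + cc d (j-1) * X (j-1) + cc d j * X j := by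
    rw [Bil_ev_right d X hb, if_pos (by omega : 1 ≤ j - 1), if_pos (by omega : j - 1 < d), e1, e2]
  have hif1 : (if j < d then cc d (j+1) * X (j+1) else 0) = cc d (j+1) * X (j+1) := by
    by_cases h : j < d
    · rw [if_pos h]
    · rw [if_neg h]
      have h0 : x (j+1) = 0 := htop (by omega)
      simp [hX, h0]
  have hif2 : (if j < d then X (j+1) else 0) = X (j+1) := by
    by_cases h : j < d
    · rw [if_pos h]
    · rw [if_neg h]
      have h0 : x (j+1) = 0 := htop (by omega)
      simp [hX, h0]
  have B2 : Bil d X (ev j)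
      = cc d (j-1) * X (j-1) + cc d j * X j + cc d (j+1) * X (j+1) := by
    rw [Bil_ev_right d X hj2, if_pos (by omega : 1 ≤ j), hif1]
  have B3 : Bil d (ev (j-1)) X = cc d (j-1) * (X (j-2) + X (j-1) + X j) := by
    rw [Bil_ev_left d X hb, if_pos (by omega : 1 ≤ j - 1), if_pos (by omega : j - 1 < d), e1, e2]
  have B4 : Bil d (ev j) X = cc d j * (X (j-1) + X j + X (j+1)) := by
    rw [Bil_ev_left d X hj2, if_pos (by omega : 1 ≤ j), hif2]
  have hE : FF d (move x j (j-1)) - FF d x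
      = (cc d (j-2) + cc d (j-1)) * (X (j-2) - (k:ℝ))
        + (cc d j + cc d (j+1)) * ((k:ℝ) - X (j+1))
        + (k:ℝ) * ((cc d (j-2) - cc d j) + (cc d (j-1) - cc d (j+1)))
        + (cc d (j-1) - cc d j) * (X (j-1) + X j - 1) := by
    rw [diff, B1, B2, B3, B4]
    ring1
  have hc1 : cc d j ≤ cc d (j-1) := cc_le_cc hd (by omega)
  have hc2 : cc d j ≤ cc d (j-2) := cc_le_cc hd (by omega)
  have hc3 : cc d (j+1) < cc d (j-1) := cc_lt_cc hd (by omega)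
  have p1 := cc_pos hd (i := j-2) (d := d)
  have p2 := cc_pos hd (i := j-1) (d := d)
  have p3 := cc_pos hd (i := j) (d := d)
  have p4 := cc_pos hd (i := j+1) (d := d)
  have q1 : (k:ℝ) ≤ X (j-2) := by simp only [hX]; exact_mod_cast hxj2
  have q2 : X (j+1) ≤ (k:ℝ) := by simp only [hX]; exact_mod_cast hxjp
  have q3 : (1:ℝ) ≤ X j := by simp only [hX]; exact_mod_cast hxj
  have q4 : (0:ℝ) ≤ X (j-1) := by positivity
  have q5 : (1:ℝ) ≤ (k:ℝ) := by exact_mod_cast hk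
  have h01 : 0 ≤ (cc d (j-2) + cc d (j-1)) * (X (j-2) - (k:ℝ)) :=
    mul_nonneg (by linarith) (by linarith)
  have h02 : 0 ≤ (cc d j + cc d (j+1)) * ((k:ℝ) - X (j+1)) :=
    mul_nonneg (by linarith) (by linarith)
  have h03 : 0 ≤ (k:ℝ) * (cc d (j-2) - cc d j) :=
    mul_nonneg (by linarith) (by linarith)
  have h04 : 0 < (k:ℝ) * (cc d (j-1) - cc d (j+1)) :=
    mul_pos (by linarith) (by linarith)
  have h05 : 0 ≤ (cc d (j-1) - cc d j) * (X (j-1) + X j - 1) :=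
    mul_nonneg (by linarith) (by linarith)
  nlinarith [hE, h01, h02, h03, h04, h05]

lemma left_move {d k : ℕ} (hd : 4 ≤ d) (hde : d % 2 = 0) (hk : 1 ≤ k) {j : ℕ}
    (hj1 : 1 ≤ j) (hj2 : j + 1 ≤ d/2) (x : ℕ → ℕ)
    (hxj : 1 ≤ x j) (hx2 : k ≤ x (j+2)) (hxm : x (j-1) ≤ k) :
    FF d x < FF d (move x j (j+1)) := by
  set X : ℕ → ℝ := fun i => (x i : ℝ) with hX
  have hne : j ≠ j + 1 := by omega
  have ha : j ≤ d := by omega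
  have hb : j + 1 ≤ d := by omega
  have hnear : near j (j+1) := by unfold near; omega
  have diff := move_diff d x ha hb hnear hne hxj
  have e1 : j + 1 - 1 = j := by omega
  have B1 : Bil d X (ev (j+1))
      = cc d j * X j + cc d (j+1) * X (j+1) + cc d (j+2) * X (j+2) := by
    rw [Bil_ev_right d X hb, if_pos (by omega : 1 ≤ j + 1), if_pos (by omega : j + 1 < d), e1]
  have B2 : Bil d X (ev j)
      = cc d (j-1) * X (j-1) + cc d j * X j + cc d (j+1) * X (j+1) := by
    rw [Bil_ev_right d X ha, if_pos (by omega : 1 ≤ j), if_pos (by omega : j < d)]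
  have B3 : Bil d (ev (j+1)) X = cc d (j+1) * (X j + X (j+1) + X (j+2)) := by
    rw [Bil_ev_left d X hb, if_pos (by omega : 1 ≤ j + 1), if_pos (by omega : j + 1 < d), e1]
  have B4 : Bil d (ev j) X = cc d j * (X (j-1) + X j + X (j+1)) := by
    rw [Bil_ev_left d X ha, if_pos (by omega : 1 ≤ j), if_pos (by omega : j < d)]
  have hE : FF d (move x j (j+1)) - FF d x
      = (cc d (j+2) + cc d (j+1)) * (X (j+2) - (k:ℝ))
        + (cc d j + cc d (j-1)) * ((k:ℝ) - X (j-1))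
        + (k:ℝ) * ((cc d (j+2) - cc d j) + (cc d (j+1) - cc d (j-1)))
        + (cc d (j+1) - cc d j) * (X j + X (j+1) - 1) := by
    rw [diff, B1, B2, B3, B4]
    ring1
  have hc1 : cc d j ≤ cc d (j+1) := cc_le_cc hd (by omega)
  have hc2 : cc d j ≤ cc d (j+2) := cc_le_cc hd (by omega)
  have hc3 : cc d (j-1) < cc d (j+1) := cc_lt_cc hd (by omega)
  have p1 := cc_pos hd (i := j+2) (d := d)
  have p2 := cc_pos hd (i := j+1) (d := d)
  have p3 := cc_pos hd (i := j) (d := d)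
  have p4 := cc_pos hd (i := j-1) (d := d)
  have q1 : (k:ℝ) ≤ X (j+2) := by simp only [hX]; exact_mod_cast hx2
  have q2 : X (j-1) ≤ (k:ℝ) := by simp only [hX]; exact_mod_cast hxm
  have q3 : (1:ℝ) ≤ X j := by simp only [hX]; exact_mod_cast hxj
  have q4 : (0:ℝ) ≤ X (j+1) := by positivity
  have q5 : (1:ℝ) ≤ (k:ℝ) := by exact_mod_cast hk
  have h01 : 0 ≤ (cc d (j+2) + cc d (j+1)) * (X (j+2) - (k:ℝ)) :=
    mul_nonneg (by linarith) (by linarith)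
  have h02 : 0 ≤ (cc d j + cc d (j-1)) * ((k:ℝ) - X (j-1)) :=
    mul_nonneg (by linarith) (by linarith)
  have h03 : 0 ≤ (k:ℝ) * (cc d (j+2) - cc d j) :=
    mul_nonneg (by linarith) (by linarith)
  have h04 : 0 < (k:ℝ) * (cc d (j+1) - cc d (j-1)) :=
    mul_pos (by linarith) (by linarith)
  have h05 : 0 ≤ (cc d (j+1) - cc d j) * (X j + X (j+1) - 1) :=
    mul_nonneg (by linarith) (by linarith)
  nlinarith [hE, h01, h02, h03, h04, h05]

/-- minimum allowed size of layer `i` -/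
def minb (d k : ℕ) : ℕ → ℕ := fun i => if i = 0 ∨ i = d then 1 else k

/-- the optimal layer-size vector -/
def xstar (d k n : ℕ) : ℕ → ℕ :=
  fun i => if i = d/2 then n + 2*k - k*d - 2 else if i ≤ d then minb d k i else 0

/-- feasibility of a layer-size vector -/
def Feas (d k n : ℕ) (x : ℕ → ℕ) : Prop :=
  x 0 = 1 ∧ (∀ i, 1 ≤ i → i ≤ d - 1 → k ≤ x i) ∧ 1 ≤ x d ∧
    (∀ i, d < i → x i = 0) ∧ ∑ i ∈ range (d+1), x i = n

def wdist (d : ℕ) (i : ℕ) : ℕ := if i ≤ d/2 then d/2 - i else i - d/2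

lemma minb_le {d k : ℕ} (hk : 1 ≤ k) (i : ℕ) : minb d k i ≤ k := by
  unfold minb; split_ifs <;> omega

lemma minb_pos {d k : ℕ} (hk : 1 ≤ k) (i : ℕ) : 1 ≤ minb d k i := by
  unfold minb; split_ifs <;> omega

lemma sum_minb {d k : ℕ} (hd : 4 ≤ d) : ∑ i ∈ range (d+1), minb d k i = 2 + (d-1)*k := by
  unfold minb
  rw [Finset.sum_ite]
  have h1 : (range (d+1)).filter (fun i => i = 0 ∨ i = d) = {0, d} := by
    ext i
    simp only [Finset.mem_filter, Finset.mem_range, Finset.mem_insert, Finset.mem_singleton]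
    omega
  have h2 : ((range (d+1)).filter (fun i => ¬(i = 0 ∨ i = d))).card = d - 1 := by
    have h3 := Finset.card_filter_add_card_filter_not (s := range (d+1))
      (p := fun i => i = 0 ∨ i = d)
    rw [h1] at h3
    have hc : ({0, d} : Finset ℕ).card = 2 := by
      rw [Finset.card_insert_of_notMem (by simp; omega), Finset.card_singleton]
    simp only [Finset.card_range] at h3
    omega
  rw [h1, Finset.sum_const, Finset.sum_const, smul_eq_mul, smul_eq_mul, h2]
  have hc : ({0, d} : Finset ℕ).card = 2 := by
    rw [Finset.card_insert_of_notMem (by simp; omega), Finset.card_singleton]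
  rw [hc]

lemma kd_arith {d k n : ℕ} (hd : 4 ≤ d) (hk : 1 ≤ k) (hn : k*(d-1)+2 ≤ n) :
    k*d - k + 2 ≤ n ∧ k ≤ k*d ∧ (d-1)*k = k*d - k ∧ 4 ≤ k*d := by
  have e1 : k*(d-1) = k*d - k := by
    rw [Nat.mul_sub, mul_one]
  have e2 : k ≤ k*d := Nat.le_mul_of_pos_right k (by omega)
  have e3 : (d-1)*k = k*d - k := by rw [Nat.sub_mul, one_mul, mul_comm d k]
  have e4 : 4 ≤ k*d := by
    calc 4 = 1*4 := by omega
    _ ≤ k*d := Nat.mul_le_mul hk hd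
  rw [e1] at hn
  exact ⟨hn, e2, e3, e4⟩

lemma xstar_mid {d k n : ℕ} : xstar d k n (d/2) = n + 2*k - k*d - 2 := by
  simp [xstar]

lemma xstar_off {d k n : ℕ} (hd : 4 ≤ d) {i : ℕ} (hi : i ≠ d/2) (hid : i ≤ d) :
    xstar d k n i = minb d k i := by
  simp only [xstar]
  rw [if_neg hi, if_pos hid]

lemma feas_xstar {d k n : ℕ} (hd : 4 ≤ d) (hde : d % 2 = 0) (hk : 1 ≤ k)
    (hn : k*(d-1)+2 ≤ n) : Feas d k n (xstar d k n) := by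
  obtain ⟨hn', e2, e3, e4⟩ := kd_arith hd hk hn
  have hm0 : (0:ℕ) ≠ d/2 := by omega
  have hmd : ¬ ((d:ℕ) = d/2) := by omega
  refine ⟨?_, ?_, ?_, ?_, ?_⟩
  · rw [xstar_off hd (by omega) (by omega)]
    unfold minb
    rw [if_pos (by omega)]
  · intro i h1 h2
    by_cases him : i = d/2
    · subst him
      rw [xstar_mid]
      omega
    · rw [xstar_off hd him (by omega)]
      unfold minb
      rw [if_neg (by omega)]
  · rw [xstar_off hd hmd (le_refl d)]
    unfold minb
    rw [if_pos (by omega)]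
  · intro i hi
    simp only [xstar]
    rw [if_neg (by omega), if_neg (by omega)]
  · have hmem : d/2 ∈ range (d+1) := mem_range.mpr (by omega)
    rw [← Finset.add_sum_erase _ _ hmem]
    have hrest : ∑ i ∈ (range (d+1)).erase (d/2), xstar d k n i
        = ∑ i ∈ (range (d+1)).erase (d/2), minb d k i := by
      refine Finset.sum_congr rfl fun i hi => ?_
      obtain ⟨hne, hr⟩ := Finset.mem_erase.mp hi
      exact xstar_off hd hne (by have := Finset.mem_range.mp hr; omega)
    rw [hrest, xstar_mid]
    have hsm : minb d k (d/2) + ∑ i ∈ (range (d+1)).erase (d/2), minb d k i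
        = 2 + (d-1)*k := by
      rw [Finset.add_sum_erase _ _ hmem, sum_minb hd]
    have hmk : minb d k (d/2) = k := by
      unfold minb
      rw [if_neg (by omega)]
    rw [hmk] at hsm
    omega

lemma sum_split (s : Finset ℕ) (f : ℕ → ℕ) {a b : ℕ} (ha : a ∈ s) (hb : b ∈ s)
    (hab : a ≠ b) :
    ∑ i ∈ s, f i = f a + f b + ∑ i ∈ (s.erase a).erase b, f i := by
  rw [← Finset.add_sum_erase s f ha,
    ← Finset.add_sum_erase _ f (Finset.mem_erase.mpr ⟨Ne.symm hab, hb⟩), add_assoc]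

lemma move_eq_of_ne {x : ℕ → ℕ} {a b i : ℕ} (hia : i ≠ a) (hib : i ≠ b) :
    move x a b i = x i := by
  simp [move, hia, hib]

lemma move_at_a {x : ℕ → ℕ} {a b : ℕ} : move x a b a = x a - 1 := by simp [move]

lemma move_at_b {x : ℕ → ℕ} {a b : ℕ} (hab : a ≠ b) : move x a b b = x b + 1 := by
  simp [move, Ne.symm hab]

lemma sum_move {d : ℕ} (x : ℕ → ℕ) {a b : ℕ} (ha : a ∈ range (d+1)) (hb : b ∈ range (d+1))
    (hab : a ≠ b) (hxa : 1 ≤ x a) :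
    ∑ i ∈ range (d+1), move x a b i = ∑ i ∈ range (d+1), x i := by
  rw [sum_split (range (d+1)) (move x a b) ha hb hab, sum_split (range (d+1)) x ha hb hab]
  have hrest : ∑ i ∈ ((range (d+1)).erase a).erase b, move x a b i
      = ∑ i ∈ ((range (d+1)).erase a).erase b, x i := by
    refine Finset.sum_congr rfl fun i hi => ?_
    obtain ⟨hib, hi2⟩ := Finset.mem_erase.mp hi
    obtain ⟨hia, _⟩ := Finset.mem_erase.mp hi2
    exact move_eq_of_ne hia hib
  rw [hrest, move_at_a, move_at_b hab]
  omega

/-- weighted excess measure -/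
def Wm (d k : ℕ) (x : ℕ → ℕ) : ℕ := ∑ i ∈ range (d+1), wdist d i * (x i - minb d k i)

lemma Wm_move {d k : ℕ} (x : ℕ → ℕ) {a b : ℕ} (ha : a ∈ range (d+1)) (hb : b ∈ range (d+1))
    (hab : a ≠ b) (hxa : minb d k a < x a) (hxb : minb d k b ≤ x b) :
    Wm d k (move x a b) + wdist d a = Wm d k x + wdist d b := by
  unfold Wm
  rw [sum_split (range (d+1)) (fun i => wdist d i * (move x a b i - minb d k i)) ha hb hab,
    sum_split (range (d+1)) (fun i => wdist d i * (x i - minb d k i)) ha hb hab]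
  have hrest : ∑ i ∈ ((range (d+1)).erase a).erase b, wdist d i * (move x a b i - minb d k i)
      = ∑ i ∈ ((range (d+1)).erase a).erase b, wdist d i * (x i - minb d k i) := by
    refine Finset.sum_congr rfl fun i hi => ?_
    obtain ⟨hib, hi2⟩ := Finset.mem_erase.mp hi
    obtain ⟨hia, _⟩ := Finset.mem_erase.mp hi2
    rw [move_eq_of_ne hia hib]
  rw [hrest]
  simp only [move_at_a, move_at_b hab]
  have a1 : x a - minb d k a = (x a - 1 - minb d k a) + 1 := by omega
  have a2 : x b + 1 - minb d k b = (x b - minb d k b) + 1 := by omega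
  rw [a1, a2, Nat.mul_add, Nat.mul_add, mul_one, mul_one]
  ring1

/-- membership facts for the max selection -/
lemma opt_aux {d k n : ℕ} (hd : 4 ≤ d) (hde : d % 2 = 0) (hk : 1 ≤ k) (hn : k*(d-1)+2 ≤ n) :
    ∀ N : ℕ, ∀ x : ℕ → ℕ, Feas d k n x → Wm d k x = N →
      FF d x ≤ FF d (xstar d k n) ∧ (FF d x = FF d (xstar d k n) → x = xstar d k n) := by
  intro N
  induction N using Nat.strong_induction_on with
  | _ N ih =>
    intro x hx hW
    obtain ⟨hx0, hxmid, hxd, hxhi, hxsum⟩ := hx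
    by_cases hS : ∀ i, i ≤ d → i ≠ d/2 → x i ≤ minb d k i
    · -- x is already the optimum
      have hxeq : x = xstar d k n := by
        have hoff : ∀ i, i ≠ d/2 → x i = xstar d k n i := by
          intro i him
          by_cases hid : i ≤ d
          · rw [xstar_off hd him hid]
            have h1 := hS i hid him
            by_cases hi0 : i = 0
            · have he : minb d k i = 1 := by unfold minb; rw [if_pos (by omega)]
              have hx0' : x i = 1 := by rw [hi0]; exact hx0
              omega
            · by_cases hidd : i = d
              · have he : minb d k i = 1 := by unfold minb; rw [if_pos (by omega)]
                have hxd' : 1 ≤ x i := by rw [hidd]; exact hxd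
                omega
              · have he : minb d k i = k := by unfold minb; rw [if_neg (by omega)]
                have h2 := hxmid i (by omega) (by omega)
                omega
          · rw [hxhi i (by omega)]
            simp only [xstar]
            rw [if_neg him, if_neg hid]
        have hsum2 : ∑ i ∈ range (d+1), xstar d k n i = n :=
          (feas_xstar hd hde hk hn).2.2.2.2
        have hmem : d/2 ∈ range (d+1) := mem_range.mpr (by omega)
        have hrest : ∑ i ∈ (range (d+1)).erase (d/2), x i
            = ∑ i ∈ (range (d+1)).erase (d/2), xstar d k n i :=
          Finset.sum_congr rfl fun i hi => hoff i (Finset.mem_erase.mp hi).1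
        have e1 : x (d/2) + ∑ i ∈ (range (d+1)).erase (d/2), x i = n := by
          rw [Finset.add_sum_erase _ _ hmem]; exact hxsum
        have e2 : xstar d k n (d/2) + ∑ i ∈ (range (d+1)).erase (d/2), xstar d k n i = n := by
          rw [Finset.add_sum_erase _ _ hmem]; exact hsum2
        funext i
        by_cases him : i = d/2
        · subst him; omega
        · exact hoff i him
      rw [hxeq]
      exact ⟨le_refl _, fun _ => rfl⟩
    · -- there is an excess layer; move toward the middle
      push_neg at hS
      obtain ⟨i0, hi0d, hi0m, hi0x⟩ := hS
      set S := (range (d+1)).filter (fun i => i ≠ d/2 ∧ minb d k i < x i) with hSdef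
      have hSne : S.Nonempty :=
        ⟨i0, Finset.mem_filter.mpr ⟨mem_range.mpr (by omega), hi0m, hi0x⟩⟩
      obtain ⟨j, hjS, hjmax⟩ := Finset.exists_max_image S (wdist d) hSne
      obtain ⟨hjr, hjm, hjx⟩ := Finset.mem_filter.mp hjS
      have hjd : j ≤ d := by have := mem_range.mp hjr; omega
      have notmem : ∀ i, i ≤ d → i ≠ d/2 → wdist d j < wdist d i → x i ≤ minb d k i := by
        intro i hid him hwd
        by_contra hcon
        have : i ∈ S := Finset.mem_filter.mpr ⟨mem_range.mpr (by omega), him, by omega⟩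
        have := hjmax i this
        omega
      by_cases hside : d/2 < j
      · -- right side: move from j to j-1
        have hj1 : d/2 + 1 ≤ j := by omega
        have hjpk : x (j+1) ≤ k := by
          by_cases hjtop : j = d
          · rw [hxhi (j+1) (by omega)]; omega
          · have h1 : wdist d j < wdist d (j+1) := by
              unfold wdist; split_ifs <;> omega
            have := notmem (j+1) (by omega) (by omega) h1
            have := minb_le (d := d) hk (j+1)
            omega
          
        have hminbj : minb d k j ≥ 1 := minb_pos hk j
        have hmove := right_move hd hde hk hj1 hjd x (by omega)
          (hxmid (j-2) (by omega) (by omega)) hjpk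
          (fun hjd' => hxhi (j+1) (by omega))
        have hbr : j - 1 ∈ range (d+1) := mem_range.mpr (by omega)
        have hjrr : j ∈ range (d+1) := mem_range.mpr (by omega)
        have hne : j ≠ j - 1 := by omega
        have hminb1 : minb d k (j-1) ≤ x (j-1) := by
          have := hxmid (j-1) (by omega) (by omega)
          have := minb_le (d := d) hk (j-1)
          omega
        -- feasibility of the moved vector
        have hfeas' : Feas d k n (move x j (j-1)) := by
          refine ⟨?_, ?_, ?_, ?_, ?_⟩
          · rw [move_eq_of_ne (by omega) (by omega)]; exact hx0
          · intro i h1 h2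
            by_cases hia : i = j
            · subst hia
              rw [move_at_a]
              have : minb d k i = k := by unfold minb; rw [if_neg (by omega)]
              omega
            · by_cases hib : i = j - 1
              · subst hib
                rw [move_at_b hne]
                have := hxmid (j-1) (by omega) (by omega)
                omega
              · rw [move_eq_of_ne hia hib]; exact hxmid i h1 h2
          · by_cases hia : j = d
            · rw [← hia, move_at_a]
              have h1 : minb d k j = 1 := by unfold minb; rw [if_pos (by omega)]
              omega
            · rw [move_eq_of_ne (by omega) (by omega)]; exact hxd
          · intro i hi
            rw [move_eq_of_ne (by omega) (by omega)]; exact hxhi i hi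
          · rw [sum_move x hjrr hbr hne (by omega)]; exact hxsum
        have hWlt : Wm d k (move x j (j-1)) < Wm d k x := by
          have := Wm_move x hjrr hbr hne hjx hminb1
          have hw1 : wdist d (j-1) < wdist d j := by
            unfold wdist; split_ifs <;> omega
          omega
        have hrec := ih (Wm d k (move x j (j-1))) (by omega) (move x j (j-1)) hfeas' rfl
        constructor
        · linarith [hrec.1]
        · intro heq
          exfalso
          linarith [hrec.1]
      · -- left side: move from j to j+1
        have hj0 : 1 ≤ j := by
          rcases Nat.eq_zero_or_pos j with h | h
          · exfalso
            have he : minb d k 0 = 1 := by unfold minb; rw [if_pos (by omega)]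
            rw [h] at hjx
            omega
          · exact h
        have hj2 : j + 1 ≤ d/2 := by omega
        have hxm1 : x (j-1) ≤ k := by
          by_cases hj1' : j = 1
          · subst hj1'; simpa [hx0] using hk
          · have h1 : wdist d j < wdist d (j-1) := by
              unfold wdist; split_ifs <;> omega
            have := notmem (j-1) (by omega) (by omega) h1
            have := minb_le (d := d) hk (j-1)
            omega
        have hmove := left_move hd hde hk hj0 hj2 x (by have := minb_pos (d:=d) hk j; omega)
          (hxmid (j+2) (by omega) (by omega)) hxm1
        have hbr : j + 1 ∈ range (d+1) := mem_range.mpr (by omega)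
        have hjrr : j ∈ range (d+1) := mem_range.mpr (by omega)
        have hne : j ≠ j + 1 := by omega
        have hminb1 : minb d k (j+1) ≤ x (j+1) := by
          have := hxmid (j+1) (by omega) (by omega)
          have := minb_le (d := d) hk (j+1)
          omega
        have hfeas' : Feas d k n (move x j (j+1)) := by
          refine ⟨?_, ?_, ?_, ?_, ?_⟩
          · rw [move_eq_of_ne (by omega) (by omega)]; exact hx0
          · intro i h1 h2
            by_cases hia : i = j
            · subst hia
              rw [move_at_a]
              have : minb d k i = k := by unfold minb; rw [if_neg (by omega)]
              omega
            · by_cases hib : i = j + 1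
              · subst hib
                rw [move_at_b hne]
                have := hxmid (j+1) (by omega) (by omega)
                omega
              · rw [move_eq_of_ne hia hib]; exact hxmid i h1 h2
          · rw [move_eq_of_ne (by omega) (by omega)]; exact hxd
          · intro i hi
            rw [move_eq_of_ne (by omega) (by omega)]; exact hxhi i hi
          · rw [sum_move x hjrr hbr hne (by have := minb_pos (d:=d) hk j; omega)]
            exact hxsum
        have hWlt : Wm d k (move x j (j+1)) < Wm d k x := by
          have := Wm_move x hjrr hbr hne hjx hminb1
          have hw1 : wdist d (j+1) < wdist d j := by
            unfold wdist; split_ifs <;> omega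
          omega
        have hrec := ih (Wm d k (move x j (j+1))) (by omega) (move x j (j+1)) hfeas' rfl
        constructor
        · linarith [hrec.1]
        · intro heq
          exfalso
          linarith [hrec.1]

theorem opt {d k n : ℕ} (hd : 4 ≤ d) (hde : d % 2 = 0) (hk : 1 ≤ k) (hn : k*(d-1)+2 ≤ n)
    {x : ℕ → ℕ} (hx : Feas d k n x) :
    FF d x ≤ FF d (xstar d k n) ∧ (FF d x = FF d (xstar d k n) → x = xstar d k n) :=
  opt_aux hd hde hk hn (Wm d k x) x hx rfl

section Graphs
variable {V : Type*} [Fintype V]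

/-- the "layered complete" graph determined by a layer function -/
def Lgraph (f : V → ℕ) : SimpleGraph V where
  Adj u v := u ≠ v ∧ near (f u) (f v)
  symm := ⟨fun u v h => ⟨h.1.symm, near_symm h.2⟩⟩
  loopless := ⟨fun u h => h.1 rfl⟩

lemma Lgraph_adj {f : V → ℕ} {u v : V} :
    (Lgraph f).Adj u v ↔ u ≠ v ∧ near (f u) (f v) := Iff.rfl

lemma walk_bound {G : SimpleGraph V} {f : V → ℕ}
    (hG : ∀ u v, G.Adj u v → near (f u) (f v)) {u v : V} (p : G.Walk u v) :
    f v ≤ f u + p.length ∧ f u ≤ f v + p.length := by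
  induction p with
  | nil => simp
  | @cons a b c h q ih =>
    have h2 := hG _ _ h
    unfold near at h2
    simp only [SimpleGraph.Walk.length_cons]
    omega

lemma dist_bound {G : SimpleGraph V} {f : V → ℕ}
    (hG : ∀ u v, G.Adj u v → near (f u) (f v)) {u v : V} (hr : G.Reachable u v) :
    f v ≤ f u + G.dist u v ∧ f u ≤ f v + G.dist u v := by
  obtain ⟨p, hp⟩ := hr.exists_walk_length_eq_dist
  have := walk_bound hG p
  omega

lemma Lgraph_walk {d : ℕ} {f : V → ℕ} (hfd : ∀ v, f v ≤ d)
    (hfs : ∀ i, i ≤ d → ∃ v, f v = i) :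
    ∀ t : ℕ, ∀ u v : V, f v ≤ f u + t → f u ≤ f v + t →
      ∃ p : (Lgraph f).Walk u v, p.length ≤ max t 1 := by
  intro t
  induction t with
  | zero =>
    intro u v h1 h2
    by_cases huv : u = v
    · subst huv
      exact ⟨SimpleGraph.Walk.nil, by simp⟩
    · have hadj : (Lgraph f).Adj u v := ⟨huv, by unfold near; omega⟩
      exact ⟨hadj.toWalk, by simp⟩
  | succ t ih =>
    intro u v h1 h2
    by_cases hin : f v ≤ f u + t ∧ f u ≤ f v + t
    · obtain ⟨p, hp⟩ := ih u v hin.1 hin.2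
      exact ⟨p, le_trans hp (by omega)⟩
    · by_cases hts : t = 0
      · subst hts
        have hne : u ≠ v := by
          intro h
          subst h
          omega
        have hadj : (Lgraph f).Adj u v := ⟨hne, by unfold near; omega⟩
        exact ⟨hadj.toWalk, by simp⟩
      · by_cases hdir : f v = f u + (t+1)
        · obtain ⟨w, hw⟩ := hfs (f v - 1) (by have := hfd v; omega)
          obtain ⟨p, hp⟩ := ih u w (by omega) (by omega)
          have hadj : (Lgraph f).Adj w v := by
            refine ⟨?_, by unfold near; omega⟩
            intro h
            rw [h] at hw
            omega
          exact ⟨p.append hadj.toWalk, by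
            rw [SimpleGraph.Walk.length_append]
            simp only [SimpleGraph.Adj.toWalk, SimpleGraph.Walk.length_cons,
              SimpleGraph.Walk.length_nil]
            omega⟩
        · have hdir2 : f u = f v + (t+1) := by omega
          obtain ⟨w, hw⟩ := hfs (f v + 1) (by have := hfd u; omega)
          obtain ⟨p, hp⟩ := ih u w (by omega) (by omega)
          have hadj : (Lgraph f).Adj w v := by
            refine ⟨?_, by unfold near; omega⟩
            intro h
            rw [h] at hw
            omega
          exact ⟨p.append hadj.toWalk, by
            rw [SimpleGraph.Walk.length_append]
            simp only [SimpleGraph.Adj.toWalk, SimpleGraph.Walk.length_cons,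
              SimpleGraph.Walk.length_nil]
            omega⟩

lemma Lgraph_reach {d : ℕ} {f : V → ℕ} (hfd : ∀ v, f v ≤ d)
    (hfs : ∀ i, i ≤ d → ∃ v, f v = i) (u v : V) : (Lgraph f).Reachable u v := by
  obtain ⟨p, _⟩ := Lgraph_walk hfd hfs d u v (by have := hfd v; omega) (by have := hfd u; omega)
  exact ⟨p⟩

lemma Lgraph_conn {d : ℕ} {f : V → ℕ} (hfd : ∀ v, f v ≤ d)
    (hfs : ∀ i, i ≤ d → ∃ v, f v = i) : (Lgraph f).Connected := by
  have hne : Nonempty V := ⟨(hfs 0 (by omega)).choose⟩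
  exact ⟨fun u v => Lgraph_reach hfd hfs u v⟩

lemma Lgraph_ecc {d : ℕ} (hd : 4 ≤ d) {f : V → ℕ} (hfd : ∀ v, f v ≤ d)
    (hfs : ∀ i, i ≤ d → ∃ v, f v = i) (v : V) :
    ecc (Lgraph f) v = max (f v) (d - f v) := by
  apply le_antisymm
  · apply Finset.sup_le
    intro u _
    obtain ⟨p, hp⟩ := Lgraph_walk hfd hfs (max (f v) (d - f v)) v u
      (by have := hfd u; have := hfd v; omega) (by have := hfd u; have := hfd v; omega)
    have h2 := SimpleGraph.dist_le p
    have : max (max (f v) (d - f v)) 1 = max (f v) (d - f v) := by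
      have := hfd v; omega
    omega
  · obtain ⟨u0, hu0⟩ := hfs 0 (by omega)
    obtain ⟨ud, hud⟩ := hfs d (le_refl d)
    have hr0 : (Lgraph f).Reachable v u0 := Lgraph_reach hfd hfs v u0
    have hrd : (Lgraph f).Reachable v ud := Lgraph_reach hfd hfs v ud
    have h0 := dist_bound (G := Lgraph f) (fun u w h => h.2) hr0
    have hd2 := dist_bound (G := Lgraph f) (fun u w h => h.2) hrd
    have e0 : (Lgraph f).dist v u0 ≤ ecc (Lgraph f) v := Finset.le_sup (Finset.mem_univ u0)
    have ed : (Lgraph f).dist v ud ≤ ecc (Lgraph f) v := Finset.le_sup (Finset.mem_univ ud)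
    omega

lemma Lgraph_diam {d : ℕ} (hd : 4 ≤ d) {f : V → ℕ} (hfd : ∀ v, f v ≤ d)
    (hfs : ∀ i, i ≤ d → ∃ v, f v = i) : diam (Lgraph f) = d := by
  apply le_antisymm
  · apply Finset.sup_le
    intro v _
    rw [Lgraph_ecc hd hfd hfs v]
    have := hfd v
    omega
  · obtain ⟨u0, hu0⟩ := hfs 0 (by omega)
    have h1 : ecc (Lgraph f) u0 ≤ diam (Lgraph f) := Finset.le_sup (Finset.mem_univ u0)
    rw [Lgraph_ecc hd hfd hfs u0, hu0] at h1
    omega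

/-- layer sizes -/
noncomputable def sizes (f : V → ℕ) : ℕ → ℕ :=
  fun i => (Finset.univ.filter fun v => f v = i).card

/-- closed-neighbourhood layer count -/
noncomputable def Ncnt (d : ℕ) (x : ℕ → ℕ) : ℕ → ℕ :=
  fun i => ∑ i' ∈ range (d+1), (if near i i' then x i' else 0)

lemma sizes_sum {d : ℕ} {f : V → ℕ} (hfd : ∀ v, f v ≤ d) :
    ∑ i ∈ range (d+1), sizes f i = Fintype.card V := by
  unfold sizes
  rw [← Finset.card_univ]
  exact (Finset.card_eq_sum_card_fiberwise (fun v _ => mem_range.mpr (by have := hfd v; omega))).symm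

lemma Lgraph_deg {d : ℕ} {f : V → ℕ} (hfd : ∀ v, f v ≤ d) (v : V) :
    deg (Lgraph f) v + 1 = Ncnt d (sizes f) (f v) := by
  unfold deg Ncnt
  have h1 : (Finset.univ.filter fun u => (Lgraph f).Adj v u)
      = (Finset.univ.filter fun u => near (f v) (f u)).erase v := by
    ext u
    simp only [Finset.mem_filter, Finset.mem_erase, Finset.mem_univ, true_and, Lgraph_adj]
    constructor
    · rintro ⟨h1, h2⟩
      exact ⟨Ne.symm h1, h2⟩
    · rintro ⟨h1, h2⟩
      exact ⟨Ne.symm h1, h2⟩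
  have hv : v ∈ Finset.univ.filter fun u => near (f v) (f u) := by
    simp [near_refl]
  rw [h1, Finset.card_erase_of_mem hv]
  have h2 : (Finset.univ.filter fun u => near (f v) (f u)).card
      = ∑ i ∈ range (d+1), (if near (f v) i then sizes f i else 0) := by
    rw [Finset.card_eq_sum_card_fiberwise
      (f := f) (t := range (d+1)) (fun u _ => mem_range.mpr (by have := hfd u; omega))]
    refine Finset.sum_congr rfl fun i _ => ?_
    by_cases hni : near (f v) i
    · rw [if_pos hni]
      unfold sizes
      congr 1
      ext u
      simp only [Finset.mem_filter, Finset.mem_univ, true_and]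
      constructor
      · rintro ⟨h3, h4⟩; exact h4
      · intro h3
        exact ⟨by rw [h3]; exact hni, h3⟩
    · rw [if_neg hni]
      rw [Finset.card_eq_zero]
      ext u
      simp only [Finset.mem_filter, Finset.mem_univ, true_and, Finset.notMem_empty,
        iff_false, not_and]
      intro h3 h4
      rw [h4] at h3
      exact hni h3
  rw [h2]
  have hcard : 1 ≤ (Finset.univ.filter fun u => near (f v) (f u)).card :=
    Finset.card_pos.mpr ⟨v, hv⟩
  omega

lemma Ncnt_pos {d : ℕ} (hd : 4 ≤ d) {f : V → ℕ} (hfd : ∀ v, f v ≤ d)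
    (hfs : ∀ i, i ≤ d → ∃ v, f v = i) {i : ℕ} (hi : i ≤ d) :
    2 ≤ Ncnt d (sizes f) i := by
  have hsz : ∀ j, j ≤ d → 1 ≤ sizes f j := by
    intro j hj
    obtain ⟨w, hw⟩ := hfs j hj
    exact Finset.card_pos.mpr ⟨w, by simp [sizes, hw]⟩
  set i2 : ℕ := if i < d then i + 1 else i - 1 with hi2
  have hii2 : i ≠ i2 ∧ i2 ≤ d ∧ near i i2 := by
    unfold near
    rw [hi2]
    split_ifs with h <;> omega
  have hsub : ({i, i2} : Finset ℕ) ⊆ range (d+1) := by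
    intro a ha
    simp only [Finset.mem_insert, Finset.mem_singleton] at ha
    rcases ha with h | h <;> (subst h; exact mem_range.mpr (by omega))
  have hle : ∑ i' ∈ ({i, i2} : Finset ℕ), (if near i i' then sizes f i' else 0)
      ≤ Ncnt d (sizes f) i := Finset.sum_le_sum_of_subset hsub
  rw [Finset.sum_insert (by simp [hii2.1]), Finset.sum_singleton,
    if_pos (near_refl i), if_pos hii2.2.2] at hle
  have := hsz i hi
  have := hsz i2 hii2.2.1
  omega

lemma Lgraph_cei {d : ℕ} (hd : 4 ≤ d) {f : V → ℕ} (hfd : ∀ v, f v ≤ d)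
    (hfs : ∀ i, i ≤ d → ∃ v, f v = i) :
    cei (Lgraph f) = FF d (sizes f) := by
  unfold cei
  have hterm : ∀ v : V, (deg (Lgraph f) v : ℝ) / (ecc (Lgraph f) v : ℝ)
      = cc d (f v) * ((Ncnt d (sizes f) (f v) : ℝ) - 1) := by
    intro v
    rw [Lgraph_ecc hd hfd hfs v]
    have h1 := Lgraph_deg hfd v
    have h2 : (deg (Lgraph f) v : ℝ) = (Ncnt d (sizes f) (f v) : ℝ) - 1 := by
      have : (deg (Lgraph f) v : ℝ) + 1 = (Ncnt d (sizes f) (f v) : ℝ) := by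
        exact_mod_cast congrArg (Nat.cast : ℕ → ℝ) h1
      linarith
    rw [h2]
    unfold cc
    ring
  rw [Finset.sum_congr rfl fun v _ => hterm v]
  rw [← Finset.sum_fiberwise_of_maps_to
    (g := f) (t := range (d+1)) (fun v _ => mem_range.mpr (by have := hfd v; omega))
    (fun v => cc d (f v) * ((Ncnt d (sizes f) (f v) : ℝ) - 1))]
  have hinner : ∀ i ∈ range (d+1),
      ∑ v ∈ Finset.univ.filter (fun v => f v = i), cc d (f v) * ((Ncnt d (sizes f) (f v) : ℝ) - 1)
      = (sizes f i : ℝ) * (cc d i * ((Ncnt d (sizes f) i : ℝ) - 1)) := by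
    intro i _
    rw [Finset.sum_congr rfl (fun v hv => by
      rw [(Finset.mem_filter.mp hv).2]), Finset.sum_const, nsmul_eq_mul]
    rfl
  rw [Finset.sum_congr rfl hinner]
  -- now the pure algebra:  FF d x = ∑ i, x i * (cc i * (N i - 1))
  unfold FF FR Bil
  have hBil : ∀ i, (∑ i' ∈ range (d+1),
        if near i i' then cc d i * (sizes f i : ℝ) * (sizes f i' : ℝ) else 0)
      = cc d i * (sizes f i : ℝ) * ((Ncnt d (sizes f) i : ℝ)) := by
    intro i
    have e : ∀ i', (if near i i' then cc d i * (sizes f i : ℝ) * (sizes f i' : ℝ) else 0)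
        = cc d i * (sizes f i : ℝ) * (if near i i' then (sizes f i' : ℝ) else 0) := by
      intro i'
      split_ifs <;> ring1
    rw [Finset.sum_congr rfl fun i' _ => e i', ← Finset.mul_sum]
    congr 1
    unfold Ncnt
    rw [Nat.cast_sum]
    refine Finset.sum_congr rfl fun i' _ => ?_
    split_ifs <;> simp
  rw [Finset.sum_congr rfl fun i _ => hBil i, ← Finset.sum_sub_distrib]
  refine Finset.sum_congr rfl fun i _ => ?_
  ring1

lemma compl_mem {A : Finset V} {w : V} : w ∈ ((A : Set V))ᶜ ↔ w ∉ A := by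
  simp [Set.mem_compl_iff]

lemma Lgraph_kconn {d k : ℕ} (hd : 4 ≤ d) (hk : 1 ≤ k) {f : V → ℕ} (hfd : ∀ v, f v ≤ d)
    (hfs : ∀ i, i ≤ d → ∃ v, f v = i)
    (hmid : ∀ i, 1 ≤ i → i ≤ d-1 → k ≤ sizes f i) (hbig : k + 1 ≤ Fintype.card V) :
    KConnected k (Lgraph f) := by
  intro A hA
  have hrep : ∀ i, 1 ≤ i → i ≤ d-1 → ∃ w : V, w ∉ A ∧ f w = i := by
    intro i h1 h2
    by_contra hcon
    push_neg at hcon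
    have hsub : (Finset.univ.filter fun v => f v = i) ⊆ A := by
      intro w hw
      simp only [Finset.mem_filter, Finset.mem_univ, true_and] at hw
      by_contra hwa
      exact (hcon w hwa) hw
    have := Finset.card_le_card hsub
    have := hmid i h1 h2
    unfold sizes at *
    omega
  have hV : Nonempty V := ⟨(hfs 0 (by omega)).choose⟩
  let r : ℕ → V := fun i =>
    if h : 1 ≤ i ∧ i ≤ d-1 then (hrep i h.1 h.2).choose else Classical.arbitrary V
  have hr : ∀ i, 1 ≤ i → i ≤ d-1 → (r i ∉ A ∧ f (r i) = i) := by
    intro i h1 h2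
    simp only [r]
    rw [dif_pos (show 1 ≤ i ∧ i ≤ d-1 from ⟨h1, h2⟩)]
    exact (hrep i h1 h2).choose_spec
  have hmem : ∀ i, 1 ≤ i → i ≤ d-1 → r i ∈ ((A : Set V))ᶜ := by
    intro i h1 h2
    exact compl_mem.mpr (hr i h1 h2).1
  set H := (Lgraph f).induce ((A : Set V))ᶜ with hH
  have hadj : ∀ (a b : V) (ha : a ∈ ((A : Set V))ᶜ) (hb : b ∈ ((A : Set V))ᶜ),
      a ≠ b → near (f a) (f b) → H.Adj ⟨a, ha⟩ ⟨b, hb⟩ := by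
    intro a b ha hb h1 h2
    exact ⟨h1, h2⟩
  have hm1 : r 1 ∈ ((A : Set V))ᶜ := hmem 1 (by omega) (by omega)
  have hchain : ∀ i, ∀ (h1 : 1 ≤ i) (h2 : i ≤ d-1),
      H.Reachable ⟨r 1, hm1⟩ ⟨r i, hmem i h1 h2⟩ := by
    intro i
    induction i with
    | zero => intro h1 h2; omega
    | succ ii ih =>
      intro h1 h2
      by_cases hii : ii = 0
      · subst hii
        rfl
      · have hstep : H.Adj ⟨r ii, hmem ii (by omega) (by omega)⟩ ⟨r (ii+1), hmem (ii+1) h1 h2⟩ := by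
          apply hadj
          · intro heq
            have e1 := (hr ii (by omega) (by omega)).2
            have e2 := (hr (ii+1) h1 h2).2
            rw [heq] at e1
            omega
          · rw [(hr ii (by omega) (by omega)).2, (hr (ii+1) h1 h2).2]
            unfold near
            omega
        exact (ih (by omega) (by omega)).trans hstep.reachable
  have hto1 : ∀ a : ↥((A : Set V)ᶜ), H.Reachable a ⟨r 1, hm1⟩ := by
    rintro ⟨av, haS⟩
    by_cases h0 : f av = 0
    · have hadj2 : H.Adj ⟨av, haS⟩ ⟨r 1, hm1⟩ := by
        apply hadj
        · intro heq
          have e1 := (hr 1 (by omega) (by omega)).2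
          rw [← heq] at e1
          omega
        · rw [h0, (hr 1 (by omega) (by omega)).2]
          unfold near
          omega
      exact hadj2.reachable
    · by_cases hdd : f av = d
      · have hadj2 : H.Adj ⟨av, haS⟩ ⟨r (d-1), hmem (d-1) (by omega) (by omega)⟩ := by
          apply hadj
          · intro heq
            have e1 := (hr (d-1) (by omega) (by omega)).2
            rw [← heq] at e1
            omega
          · rw [hdd, (hr (d-1) (by omega) (by omega)).2]
            unfold near
            omega
        exact hadj2.reachable.trans (hchain (d-1) (by omega) (by omega)).symm
      · have h1 : 1 ≤ f av := by omega
        have h2 : f av ≤ d - 1 := by have := hfd av; omega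
        by_cases heq : av = r (f av)
        · have he2 : (⟨av, haS⟩ : ↥((A : Set V)ᶜ)) = ⟨r (f av), hmem _ h1 h2⟩ := Subtype.ext heq
          rw [he2]
          exact (hchain (f av) h1 h2).symm
        · have hadj2 : H.Adj ⟨av, haS⟩ ⟨r (f av), hmem _ h1 h2⟩ := by
            apply hadj
            · exact heq
            · rw [(hr (f av) h1 h2).2]
              exact near_refl _
          exact hadj2.reachable.trans (hchain (f av) h1 h2).symm
  have hncard : ((A : Set V))ᶜ.ncard = Fintype.card V - A.card := by
    have h1 := Set.ncard_add_ncard_compl (A : Set V)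
    rw [Set.ncard_coe_finset, Nat.card_eq_fintype_card] at h1
    have h2 : A.card ≤ Fintype.card V := by
      simpa using Finset.card_le_univ A
    omega
  have hcard2 : 1 < ((A : Set V))ᶜ.ncard := by
    rw [hncard]
    omega
  constructor
  · rw [SimpleGraph.connected_iff]
    constructor
    · intro a b
      exact (hto1 a).trans (hto1 b).symm
    · have : ((A : Set V))ᶜ.Nonempty := by
        apply Set.nonempty_of_ncard_ne_zero
        omega
      exact this.to_subtype
  · exact hcard2

noncomputable def psum (x : ℕ → ℕ) : ℕ → ℕ := fun j => ∑ i ∈ range j, x i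

lemma psum_mono (x : ℕ → ℕ) {a b : ℕ} (h : a ≤ b) : psum x a ≤ psum x b :=
  Finset.sum_le_sum_of_subset (Finset.range_subset_range.mpr h)

lemma psum_succ (x : ℕ → ℕ) (j : ℕ) : psum x (j+1) = psum x j + x j :=
  Finset.sum_range_succ x j

lemma exists_layer_fn {d : ℕ} (x : ℕ → ℕ)
    (hsum : ∑ i ∈ range (d+1), x i = Fintype.card V) :
    ∃ f : V → ℕ, (∀ v, f v ≤ d) ∧ (∀ i, i ≤ d → sizes f i = x i) := by
  classical
  set e := Fintype.equivFin V with he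
  set g : V → ℕ := fun v => Nat.findGreatest (fun j => psum x j ≤ (e v).val) d with hg
  have hcV : psum x (d+1) = Fintype.card V := hsum
  have hchar : ∀ v : V, ∀ i : ℕ, i ≤ d →
      (g v = i ↔ psum x i ≤ (e v).val ∧ (e v).val < psum x (i+1)) := by
    intro v i hi
    have hvlt : (e v).val < psum x (d+1) := by rw [hcV]; exact (e v).isLt
    rw [hg]
    simp only []
    rw [Nat.findGreatest_eq_iff]
    constructor
    · rintro ⟨h1, h2, h3⟩
      constructor
      · by_cases hi0 : i = 0
        · subst hi0
          simp [psum]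
        · exact h2 hi0
      · by_cases hid : i < d
        · have := h3 (lt_add_one i) (by omega)
          omega
        · have : i = d := by omega
          subst this
          omega
    · rintro ⟨h1, h2⟩
      refine ⟨hi, fun _ => h1, ?_⟩
      intro m hm1 hm2 hP
      have : psum x (i+1) ≤ psum x m := psum_mono x (by omega)
      omega
  refine ⟨g, ?_, ?_⟩
  · intro v
    exact Nat.findGreatest_le d
  · intro i hi
    unfold sizes
    have hcard : (Finset.univ.filter fun v => g v = i).card
        = (Finset.Ico (psum x i) (psum x (i+1))).card := by
      refine Finset.card_bij (fun v _ => (e v).val) ?_ ?_ ?_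
      · intro v hv
        rw [Finset.mem_filter] at hv
        rw [Finset.mem_Ico]
        exact (hchar v i hi).mp hv.2
      · intro v1 hv1 v2 hv2 hval
        have : e v1 = e v2 := Fin.ext hval
        exact e.injective this
      · intro b hb
        rw [Finset.mem_Ico] at hb
        have hblt : b < Fintype.card V := by
          rw [← hcV]
          have := psum_mono x (show i+1 ≤ d+1 by omega)
          omega
        refine ⟨e.symm ⟨b, hblt⟩, ?_, ?_⟩
        · rw [Finset.mem_filter]
          refine ⟨Finset.mem_univ _, ?_⟩
          rw [hchar _ i hi]
          simp only [Equiv.apply_symm_apply]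
          exact hb
        · simp only [Equiv.apply_symm_apply]
    rw [hcard, Nat.card_Ico, psum_succ]
    omega

lemma walk_getVert_dist {G : SimpleGraph V} (hc : G.Connected) {u v : V} (p : G.Walk u v) :
    ∀ i, i ≤ p.length → G.dist u (p.getVert i) ≤ i ∧ G.dist (p.getVert i) v ≤ p.length - i := by
  induction p with
  | nil =>
    intro i hi
    simp only [SimpleGraph.Walk.length_nil, Nat.le_zero] at hi
    subst hi
    simp [SimpleGraph.Walk.getVert]
  | @cons a b c h q ih =>
    intro i hi
    cases i with
    | zero =>
      constructor
      · simp [SimpleGraph.Walk.getVert]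
      · simpa [SimpleGraph.Walk.getVert] using SimpleGraph.dist_le (SimpleGraph.Walk.cons h q)
    | succ ii =>
      have hii : ii ≤ q.length := by
        simp only [SimpleGraph.Walk.length_cons] at hi
        omega
      have hih := ih ii hii
      have hgv : (SimpleGraph.Walk.cons h q).getVert (ii+1) = q.getVert ii := rfl
      rw [hgv]
      constructor
      · have htri := hc.dist_triangle (u := a) (v := b) (w := q.getVert ii)
        have hab : G.dist a b ≤ 1 := by
          simpa using SimpleGraph.dist_le h.toWalk
        omega
      · simp only [SimpleGraph.Walk.length_cons]
        omega

lemma layer_surj {G : SimpleGraph V} (hc : G.Connected) {x0 z : V} {d : ℕ}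
    (hz : G.dist x0 z = d) : ∀ i, i ≤ d → ∃ w, G.dist x0 w = i := by
  intro i hi
  obtain ⟨p, hp⟩ := (hc x0 z).exists_walk_length_eq_dist
  refine ⟨p.getVert i, ?_⟩
  have h1 := walk_getVert_dist hc p i (by omega)
  have htri := hc.dist_triangle (u := x0) (v := p.getVert i) (w := z)
  omega

lemma walk_cross {G : SimpleGraph V} {f : V → ℕ} (hG : ∀ u v, G.Adj u v → near (f u) (f v))
    {i : ℕ} : ∀ {u v : V} (p : G.Walk u v), f u < i → i ≤ f v → ∃ w ∈ p.support, f w = i := by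
  intro u v p
  induction p with
  | nil => intro h1 h2; omega
  | @cons a b c h q ih =>
    intro h1 h2
    have hnear := hG _ _ h
    by_cases hb : f b = i
    · exact ⟨b, by simp [SimpleGraph.Walk.support_cons], hb⟩
    · have hlt : f b < i := by unfold near at hnear; omega
      obtain ⟨w, hw1, hw2⟩ := ih hlt h2
      exact ⟨w, by simp only [SimpleGraph.Walk.support_cons, List.mem_cons]; right; exact hw1, hw2⟩

lemma FF_congr {d : ℕ} {x y : ℕ → ℕ} (h : ∀ i, i ≤ d → x i = y i) : FF d x = FF d y := by
  unfold FF FR Bil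
  congr 1
  · refine Finset.sum_congr rfl fun i hi => ?_
    refine Finset.sum_congr rfl fun i' hi' => ?_
    simp only []
    rw [h i (by have := mem_range.mp hi; omega), h i' (by have := mem_range.mp hi'; omega)]
  · refine Finset.sum_congr rfl fun i hi => ?_
    simp only []
    rw [h i (by have := mem_range.mp hi; omega)]

lemma build_iso (G : SimpleGraph V) (f : V → ℕ) (cs : List ℕ)
    (hG : G = Lgraph f) (hlen : ∀ v, f v < cs.length)
    (hsz : ∀ i (h : i < cs.length), sizes f i = cs.get ⟨i, h⟩) :
    Nonempty (G ≃g seqCompleteJoin cs) := by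
  subst hG
  classical
  set fh : V → Fin cs.length := fun v => ⟨f v, hlen v⟩ with hfh
  have e2 : ∀ i : Fin cs.length, {v : V // fh v = i} ≃ Fin (cs.get i) := by
    intro i
    apply Fintype.equivFinOfCardEq
    have h1 : Fintype.card {v : V // fh v = i} = (Finset.univ.filter fun v => fh v = i).card :=
      Fintype.card_subtype _
    have h2 : (Finset.univ.filter fun v => fh v = i) = (Finset.univ.filter fun v => f v = i.val) := by
      ext v
      simp only [Finset.mem_filter, Finset.mem_univ, true_and, hfh, Fin.ext_iff]
    rw [h1, h2]
    have h3 := hsz i.val i.isLt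
    unfold sizes at h3
    rw [h3]
  set e : V ≃ (i : Fin cs.length) × Fin (cs.get i) :=
    (Equiv.sigmaFiberEquiv fh).symm.trans (Equiv.sigmaCongrRight e2) with he
  have hfst : ∀ a : V, ((e a).1 : ℕ) = f a := fun a => rfl
  refine ⟨⟨e, ?_⟩⟩
  intro a b
  show (e a ≠ e b ∧ _) ↔ _
  constructor
  · rintro ⟨h1, h2⟩
    refine ⟨fun hab => h1 (by rw [hab]), ?_⟩
    rw [hfst a, hfst b] at h2
    exact h2
  · rintro ⟨h1, h2⟩
    refine ⟨fun hab => h1 (e.injective hab), ?_⟩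
    rw [hfst a, hfst b]
    exact h2

lemma cs_len {d k n : ℕ} (hd : 4 ≤ d) (hde : d % 2 = 0) :
    ([1] ++ List.replicate ((d - 2) / 2) k ++ [n + 2 * k - k * d - 2] ++
        List.replicate ((d - 2) / 2) k ++ [1] : List ℕ).length = d + 1 := by
  simp [List.length_append, List.length_replicate]
  omega
lemma cs_get {d k n : ℕ} (hd : 4 ≤ d) (hde : d % 2 = 0)
    {i : ℕ} (h : i < ([1] ++ List.replicate ((d - 2) / 2) k ++ [n + 2 * k - k * d - 2] ++
        List.replicate ((d - 2) / 2) k ++ [1] : List ℕ).length) :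
    ([1] ++ List.replicate ((d - 2) / 2) k ++ [n + 2 * k - k * d - 2] ++
        List.replicate ((d - 2) / 2) k ++ [1] : List ℕ).get ⟨i, h⟩ = xstar d k n i := by
  have hlen := cs_len (k := k) (n := n) hd hde
  have hid : i ≤ d := by rw [hlen] at h; omega
  set mq := (d - 2) / 2 with hmq
  set M := n + 2 * k - k * d - 2 with hM
  have hmqd : mq = d/2 - 1 := by omega
  have hrl : (List.replicate mq k).length = mq := List.length_replicate
  rw [List.get_eq_getElem]
  have hlform : ([1] ++ List.replicate mq k ++ [M] ++ List.replicate mq k ++ [1] : List ℕ)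
      = 1 :: (List.replicate mq k ++ (M :: (List.replicate mq k ++ [1]))) := by simp
  simp only [← hmq, ← hM, hlform]
  rcases Nat.eq_zero_or_pos i with hi0 | hip
  · subst hi0
    rw [List.getElem_cons_zero, xstar_off hd (by omega) (by omega)]
    unfold minb
    rw [if_pos (by omega)]
  · obtain ⟨j, rfl⟩ : ∃ j, i = j + 1 := ⟨i - 1, by omega⟩
    rw [List.getElem_cons_succ]
    by_cases hj1 : j < mq
    · rw [List.getElem_append_left (by omega)]
      rw [List.getElem_replicate, xstar_off hd (by omega) (by omega)]
      unfold minb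
      rw [if_neg (by omega)]
    · rw [List.getElem_append_right (by omega)]
      have hj2 : j - (List.replicate mq k).length = j - mq := by rw [hrl]
      rcases Nat.eq_zero_or_pos (j - mq) with hjm0 | hjmp
      · have he : j - (List.replicate mq k).length = 0 := by omega
        simp only [he]
        rw [List.getElem_cons_zero]
        have : j + 1 = d/2 := by omega
        rw [this, xstar_mid]
      · have he : j - (List.replicate mq k).length = (j - mq - 1) + 1 := by omega
        simp only [he]
        rw [List.getElem_cons_succ]
        by_cases ht : j - mq - 1 < mq
        · rw [List.getElem_append_left (by omega)]
          rw [List.getElem_replicate, xstar_off hd (by omega) (by omega)]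
          unfold minb
          rw [if_neg (by omega)]
        · rw [List.getElem_append_right (by omega)]
          have hi : j + 1 = d := by
            rw [hlen] at h
            omega
          have : ([1] : List ℕ)[j - mq - 1 - (List.replicate mq k).length]'(by
            simp only [List.length_singleton]
            rw [hlen] at h
            omega) = 1 := by
            have : j - mq - 1 - (List.replicate mq k).length = 0 := by
              rw [hrl]
              rw [hlen] at h
              omega
            simp [this]
          rw [this, hi, xstar_off hd (by omega) (by omega)]
          unfold minb
          rw [if_pos (by omega)]


end Graphs

/-- for even diameter `d ≥ 4`, the maximizer of the CEI among
`k`-connected graphs of order `n` with diameter `d` is the sequential join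
`K_1 ∨ [(d-2)/2]K_k ∨ K_{n-kd+2k-2} ∨ [(d-2)/2]K_k ∨ K_1`. -/
theorem extremal_even_diam {U : Type} [Fintype U] (G : SimpleGraph U) (k d n : ℕ)
    (hk : 1 ≤ k) (hd : 4 ≤ d) (hde : Even d) (hn : k * (d - 1) + 2 ≤ n)
    (hcard : Fintype.card U = n) (hconn : KConnected k G) (hdiam : diam G = d)
    (hmax : ∀ (W : Type) [Fintype W] (H : SimpleGraph W),
      Fintype.card W = n → KConnected k H → diam H = d → cei H ≤ cei G) :
    Nonempty (G ≃g seqCompleteJoin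
      ([1] ++ List.replicate ((d - 2) / 2) k ++ [n + 2 * k - k * d - 2] ++
        List.replicate ((d - 2) / 2) k ++ [1])) := by
  classical
  have hde' : d % 2 = 0 := Nat.even_iff.mp hde
  obtain ⟨hnk, e2, e3, e4⟩ := kd_arith hd hk hn
  have hn5 : 5 ≤ n := by
    have h3 : 3 ≤ k*(d-1) := by
      calc 3 = 1*3 := by omega
      _ ≤ k*(d-1) := Nat.mul_le_mul hk (by omega)
    omega
  have hUne : Nonempty U := by
    rw [← Fintype.card_pos_iff]
    omega
  have hGconn : G.Connected := by
    have h0 := (hconn ∅ (by simp; omega)).1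
    have hset : ((↑(∅ : Finset U) : Set U)ᶜ) = Set.univ := by simp
    rw [hset] at h0
    exact (SimpleGraph.induceUnivIso G).connected_iff.mp h0
  obtain ⟨x0, _, hx0⟩ := Finset.exists_mem_eq_sup (Finset.univ : Finset U)
    Finset.univ_nonempty (fun v => ecc G v)
  have heccx0 : ecc G x0 = d := by
    unfold diam at hdiam
    rw [hdiam] at hx0
    exact hx0.symm
  set ℓ : U → ℕ := fun v => G.dist x0 v with hℓ
  have heccle : ∀ v, ecc G v ≤ d := by
    intro v
    have h1 : ecc G v ≤ diam G := Finset.le_sup (Finset.mem_univ v)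
    omega
  have hfd : ∀ v, ℓ v ≤ d := by
    intro v
    have h1 : G.dist x0 v ≤ ecc G x0 := Finset.le_sup (Finset.mem_univ v)
    simp only [hℓ]
    omega
  obtain ⟨z, _, hz0⟩ := Finset.exists_mem_eq_sup (Finset.univ : Finset U)
    Finset.univ_nonempty (fun u => G.dist x0 u)
  have hzd : G.dist x0 z = d := by
    unfold ecc at heccx0
    rw [hz0] at heccx0
    exact heccx0
  have hfs : ∀ i, i ≤ d → ∃ w, ℓ w = i := layer_surj hGconn hzd
  have hGnear : ∀ u v, G.Adj u v → near (ℓ u) (ℓ v) := by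
    intro u v huv
    have h1 := hGconn.dist_triangle (u := x0) (v := u) (w := v)
    have h2 := hGconn.dist_triangle (u := x0) (v := v) (w := u)
    have h3 : G.dist u v ≤ 1 := by simpa using SimpleGraph.dist_le huv.toWalk
    have h4 : G.dist v u = G.dist u v := SimpleGraph.dist_comm
    unfold near
    simp only [hℓ]
    omega
  have hGle : G ≤ Lgraph ℓ := by
    intro u v huv
    exact ⟨G.ne_of_adj huv, hGnear u v huv⟩
  have hHconn : KConnected k (Lgraph ℓ) := by
    intro A hA
    obtain ⟨hc, hn2⟩ := hconn A hA
    refine ⟨hc.mono ?_, hn2⟩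
    intro a b hab
    exact hGle hab
  have hdiamH : diam (Lgraph ℓ) = d := Lgraph_diam hd hfd hfs
  have hceiHle : cei (Lgraph ℓ) ≤ cei G := hmax U (Lgraph ℓ) hcard hHconn hdiamH
  have hdegle : ∀ v, deg G v ≤ deg (Lgraph ℓ) v := by
    intro v
    apply Finset.card_le_card
    intro u hu
    simp only [Finset.mem_filter, Finset.mem_univ, true_and] at *
    exact hGle hu
  have heccH : ∀ v, ecc (Lgraph ℓ) v = max (ℓ v) (d - ℓ v) := Lgraph_ecc hd hfd hfs
  have heccge : ∀ v, ecc (Lgraph ℓ) v ≤ ecc G v := by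
    intro v
    have h1 : G.dist v x0 ≤ ecc G v := Finset.le_sup (Finset.mem_univ x0)
    have h2 : G.dist v z ≤ ecc G v := Finset.le_sup (Finset.mem_univ z)
    have h3 : G.dist x0 z ≤ G.dist x0 v + G.dist v z := hGconn.dist_triangle
    have h4 : G.dist v x0 = G.dist x0 v := SimpleGraph.dist_comm
    rw [heccH v]
    simp only [hℓ] at *
    omega
  have hdegHpos : ∀ v, 1 ≤ deg (Lgraph ℓ) v := by
    intro v
    have h1 := Lgraph_deg (d := d) hfd v
    have h2 := Ncnt_pos hd hfd hfs (hfd v)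
    omega
  have heccHpos : ∀ v, 1 ≤ ecc (Lgraph ℓ) v := by
    intro v
    rw [heccH v]
    have := hfd v
    omega
  have htermle : ∀ v : U, (deg G v : ℝ) / (ecc G v) ≤
      (deg (Lgraph ℓ) v : ℝ) / (ecc (Lgraph ℓ) v) := by
    intro v
    apply div_le_div₀ (by positivity) (by exact_mod_cast hdegle v)
      (by exact_mod_cast heccHpos v) (by exact_mod_cast heccge v)
  have hceiG : cei G = cei (Lgraph ℓ) := by
    apply le_antisymm ?_ hceiHle
    unfold cei
    exact Finset.sum_le_sum fun v _ => htermle v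
  have hterm_eq : ∀ v : U, (deg G v : ℝ) / (ecc G v)
      = (deg (Lgraph ℓ) v : ℝ) / (ecc (Lgraph ℓ) v) := by
    intro v
    by_contra hne2
    have hlt := lt_of_le_of_ne (htermle v) hne2
    have hslt : cei G < cei (Lgraph ℓ) := by
      unfold cei
      exact Finset.sum_lt_sum (fun i _ => htermle i) ⟨v, Finset.mem_univ v, hlt⟩
    rw [hceiG] at hslt
    exact lt_irrefl _ hslt
  have hdegeq : ∀ v, deg G v = deg (Lgraph ℓ) v := by
    intro v
    have h0 := hterm_eq v
    have hp1 : (0:ℝ) < ((ecc G v : ℕ) : ℝ) := by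
      have := le_trans (heccHpos v) (heccge v)
      exact_mod_cast this
    have hp2 : (0:ℝ) < ((ecc (Lgraph ℓ) v : ℕ) : ℝ) := by
      have := heccHpos v
      exact_mod_cast this
    have e1 : (deg G v : ℝ)/(ecc G v) ≤ (deg (Lgraph ℓ) v : ℝ)/(ecc G v) :=
      div_le_div₀ (by positivity) (by exact_mod_cast hdegle v) hp1 (le_refl _)
    have e2 : (deg (Lgraph ℓ) v : ℝ)/(ecc G v) ≤ (deg (Lgraph ℓ) v : ℝ)/(ecc (Lgraph ℓ) v) :=
      div_le_div₀ (by positivity) (le_refl _) hp2 (by exact_mod_cast heccge v)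
    have e3 : (deg G v : ℝ)/(ecc G v) = (deg (Lgraph ℓ) v : ℝ)/(ecc G v) := by
      apply le_antisymm e1
      rw [h0]
      exact e2
    field_simp at e3
    exact_mod_cast e3
  have hGeq : G = Lgraph ℓ := by
    have hfil : ∀ v, (Finset.univ.filter fun u => G.Adj v u)
        = (Finset.univ.filter fun u => (Lgraph ℓ).Adj v u) := by
      intro v
      apply Finset.eq_of_subset_of_card_le
      · intro u hu
        simp only [Finset.mem_filter, Finset.mem_univ, true_and] at *
        exact hGle hu
      · have h5 := hdegeq v
        unfold deg at h5
        omega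
    ext u v
    constructor
    · intro h
      exact hGle h
    · intro h
      have hmem : v ∈ Finset.univ.filter (fun w => G.Adj u w) := by
        rw [hfil u]
        simp [h]
      simpa using hmem
  have hs0 : sizes ℓ 0 = 1 := by
    unfold sizes
    have hset : (Finset.univ.filter fun v => ℓ v = 0) = {x0} := by
      ext v
      simp only [Finset.mem_filter, Finset.mem_univ, true_and, Finset.mem_singleton, hℓ]
      rw [hGconn.dist_eq_zero_iff]
      exact ⟨fun h => h.symm, fun h => h.symm⟩
    rw [hset, Finset.card_singleton]
  have hsd : 1 ≤ sizes ℓ d := by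
    apply Finset.card_pos.mpr
    exact ⟨z, by simp [sizes, hℓ, hzd]⟩
  have hshi : ∀ i, d < i → sizes ℓ i = 0 := by
    intro i hi
    unfold sizes
    rw [Finset.card_eq_zero]
    ext v
    simp only [Finset.mem_filter, Finset.mem_univ, true_and, Finset.notMem_empty, iff_false]
    intro hv
    have := hfd v
    omega
  have hsmid : ∀ i, 1 ≤ i → i ≤ d - 1 → k ≤ sizes ℓ i := by
    intro i h1 h2
    by_contra hcon
    push_neg at hcon
    set A := Finset.univ.filter (fun v => ℓ v = i) with hAdef
    have hAcard : A.card < k := hcon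
    obtain ⟨hc, _⟩ := hconn A hAcard
    have hl0 : ℓ x0 = 0 := by simp [hℓ]
    have hx0m : x0 ∈ ((A : Set U))ᶜ := compl_mem.mpr (by
      simp only [hAdef, Finset.mem_filter, Finset.mem_univ, true_and]
      omega)
    have hzm : z ∈ ((A : Set U))ᶜ := compl_mem.mpr (by
      simp only [hAdef, Finset.mem_filter, Finset.mem_univ, true_and, hℓ, hzd]
      omega)
    obtain ⟨p⟩ := hc ⟨x0, hx0m⟩ ⟨z, hzm⟩
    let hom : (G.induce ((A : Set U))ᶜ) →g G := ⟨Subtype.val, fun {a b} hab => hab⟩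
    have hlz : i ≤ ℓ z := by simp [hℓ, hzd]; omega
    obtain ⟨w, hw1, hw2⟩ := walk_cross hGnear (p.map hom)
      (by show ℓ x0 < i; rw [hl0]; omega) hlz
    rw [SimpleGraph.Walk.support_map] at hw1
    obtain ⟨a, ha1, ha2⟩ := List.mem_map.mp hw1
    have hwA : w ∈ A := by
      simp only [hAdef, Finset.mem_filter, Finset.mem_univ, true_and]
      exact hw2
    have haA : (a : U) ∈ ((A : Set U))ᶜ := a.prop
    rw [compl_mem] at haA
    have : (a : U) = w := ha2
    rw [this] at haA
    exact haA hwA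
  have hfeas : Feas d k n (sizes ℓ) := ⟨hs0, hsmid, hsd, hshi, by rw [sizes_sum hfd, hcard]⟩
  have hfx := feas_xstar (n := n) hd hde' hk hn
  have hxsum : ∑ i ∈ range (d+1), xstar d k n i = Fintype.card U := by
    rw [hcard]
    exact hfx.2.2.2.2
  obtain ⟨fc, hfcd, hfcs⟩ := exists_layer_fn (xstar d k n) hxsum
  have hxpos : ∀ i, i ≤ d → 1 ≤ xstar d k n i := by
    intro i hi
    rcases Nat.eq_zero_or_pos i with h | h
    · subst h
      rw [hfx.1]
    · by_cases hid : i = d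
      · subst hid
        exact hfx.2.2.1
      · have := hfx.2.1 i h (by omega)
        omega
  have hfcs' : ∀ i, i ≤ d → ∃ v, fc v = i := by
    intro i hi
    have h1 : 1 ≤ sizes fc i := by
      rw [hfcs i hi]
      exact hxpos i hi
    obtain ⟨v, hv⟩ := Finset.card_pos.mp h1
    exact ⟨v, (Finset.mem_filter.mp hv).2⟩
  have e5 : 2*k ≤ k*d := by
    calc 2*k = k*2 := by ring
    _ ≤ k*d := Nat.mul_le_mul_left k (by omega)
  have hC : KConnected k (Lgraph fc) := Lgraph_kconn hd hk hfcd hfcs'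
      (fun i h1 h2 => by rw [hfcs i (by omega)]; exact hfx.2.1 i h1 h2)
      (by rw [hcard]; omega)
  have hceiC : cei (Lgraph fc) ≤ cei G := hmax U (Lgraph fc) hcard hC (Lgraph_diam hd hfcd hfcs')
  have hceiCF : cei (Lgraph fc) = FF d (xstar d k n) := by
    rw [Lgraph_cei hd hfcd hfcs']
    exact FF_congr (fun i hi => hfcs i hi)
  have hceiGF : cei G = FF d (sizes ℓ) := by
    rw [hceiG]
    exact Lgraph_cei hd hfd hfs
  obtain ⟨hle, heq⟩ := opt hd hde' hk hn hfeas
  have hFFeq : FF d (sizes ℓ) = FF d (xstar d k n) := by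
    apply le_antisymm hle
    rw [← hceiCF, ← hceiGF]
    exact hceiC
  have hszeq : sizes ℓ = xstar d k n := heq hFFeq
  apply build_iso G ℓ _ hGeq
  · intro v
    rw [cs_len hd hde']
    have := hfd v
    omega
  · intro i h
    rw [cs_get hd hde']
    have hid : i ≤ d := by
      rw [cs_len hd hde'] at h
      omega
    rw [hszeq]
end CEI
end

section
/- Let k ≥ 1, let d ≥ 3 be odd, and let n ≥ k(d-1)+2. Any two graphs in the family H(n,k,d) have equal connective eccentricity index; that is, for any s, t, s', t' ≥ k-1 with s + t = s' + t' = n - kd + 3k - 4, the graphs K_1 ∨ [(d-3)/2]K_k ∨ K_{s+1} ∨ K_{t+1} ∨ [(d-3)/2]K_k ∨ K_1 and K_1 ∨ [(d-3)/2]K_k ∨ K_{s'+1} ∨ K_{t'+1} ∨ [(d-3)/2]K_k ∨ K_1 have the same connective eccentricity index. -/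
open Finset
open scoped Classical

namespace CEI

variable {V : Type*}

variable {cs : List ℕ}

lemma adj_iff {x y : (i : Fin cs.length) × Fin (cs.get i)} :
    (seqCompleteJoin cs).Adj x y ↔
      x ≠ y ∧ (x.1.val = y.1.val ∨ x.1.val + 1 = y.1.val ∨ y.1.val + 1 = x.1.val) := Iff.rfl

lemma ne_of_fst_ne {x y : (i : Fin cs.length) × Fin (cs.get i)} (h : x.1.1 ≠ y.1.1) : x ≠ y :=
  fun he => h (by rw [he])

lemma dist_lower {x y : (i : Fin cs.length) × Fin (cs.get i)}
    (w : (seqCompleteJoin cs).Walk x y) : Nat.dist x.1.1 y.1.1 ≤ w.length := by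
  induction w with
  | nil => simp [Nat.dist]
  | @cons a b c h w ih =>
    have h1 : Nat.dist a.1.1 b.1.1 ≤ 1 := by
      obtain ⟨-, h⟩ := h
      simp only [Nat.dist]; omega
    calc Nat.dist a.1.1 c.1.1 ≤ Nat.dist a.1.1 b.1.1 + Nat.dist b.1.1 c.1.1 :=
          Nat.dist.triangle_inequality _ _ _
      _ ≤ 1 + w.length := add_le_add h1 ih
      _ = (SimpleGraph.Walk.cons h w).length := by simp [SimpleGraph.Walk.length_cons]; omega

lemma walk_up (hpos : ∀ i : Fin cs.length, 0 < cs.get i) :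
    ∀ (n : ℕ) (x y : (i : Fin cs.length) × Fin (cs.get i)), 0 < n → x.1.1 + n = y.1.1 →
      ∃ w : (seqCompleteJoin cs).Walk x y, w.length = n := by
  intro n
  induction n with
  | zero => omega
  | succ n ih =>
    intro x y _ hxy
    rcases Nat.eq_zero_or_pos n with hn | hn
    · subst hn
      have hadj : (seqCompleteJoin cs).Adj x y :=
        ⟨ne_of_fst_ne (by omega), by omega⟩
      exact ⟨SimpleGraph.Walk.cons hadj SimpleGraph.Walk.nil, by simp⟩
    · have hlt : x.1.1 + 1 < cs.length := by have := y.1.isLt; omega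
      let j : Fin cs.length := ⟨x.1.1 + 1, hlt⟩
      let z : (i : Fin cs.length) × Fin (cs.get i) := ⟨j, ⟨0, hpos j⟩⟩
      have hz : z.1.1 = x.1.1 + 1 := rfl
      have hadj : (seqCompleteJoin cs).Adj x z :=
        ⟨ne_of_fst_ne (by omega), by omega⟩
      obtain ⟨w, hw⟩ := ih z y hn (by omega)
      exact ⟨SimpleGraph.Walk.cons hadj w, by simp [hw]⟩

lemma exists_walk (hpos : ∀ i : Fin cs.length, 0 < cs.get i)
    (x y : (i : Fin cs.length) × Fin (cs.get i)) :
    ∃ w : (seqCompleteJoin cs).Walk x y, w.length = if x = y then 0 else max (Nat.dist x.1.1 y.1.1) 1 := by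
  by_cases hxy : x = y
  · subst hxy; exact ⟨SimpleGraph.Walk.nil, by simp⟩
  rcases lt_trichotomy x.1.1 y.1.1 with h | h | h
  · obtain ⟨w, hw⟩ := walk_up hpos (y.1.1 - x.1.1) x y (by omega) (by omega)
    refine ⟨w, ?_⟩
    rw [hw, if_neg hxy]
    simp only [Nat.dist]; omega
  · have hadj : (seqCompleteJoin cs).Adj x y := ⟨hxy, by omega⟩
    refine ⟨SimpleGraph.Walk.cons hadj SimpleGraph.Walk.nil, ?_⟩
    rw [if_neg hxy]
    simp only [SimpleGraph.Walk.length_cons, SimpleGraph.Walk.length_nil, Nat.dist]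
    omega
  · obtain ⟨w, hw⟩ := walk_up hpos (x.1.1 - y.1.1) y x (by omega) (by omega)
    refine ⟨w.reverse, ?_⟩
    rw [SimpleGraph.Walk.length_reverse, hw, if_neg hxy]
    simp only [Nat.dist]; omega

lemma dist_eq (hpos : ∀ i : Fin cs.length, 0 < cs.get i)
    (x y : (i : Fin cs.length) × Fin (cs.get i)) :
    (seqCompleteJoin cs).dist x y = if x = y then 0 else max (Nat.dist x.1.1 y.1.1) 1 := by
  obtain ⟨w, hw⟩ := exists_walk hpos x y
  by_cases hxy : x = y
  · subst hxy; simp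
  rw [if_neg hxy] at hw ⊢
  have hub : (seqCompleteJoin cs).dist x y ≤ max (Nat.dist x.1.1 y.1.1) 1 :=
    hw ▸ SimpleGraph.dist_le w
  have hreach : (seqCompleteJoin cs).Reachable x y := ⟨w⟩
  have hpos1 : 0 < (seqCompleteJoin cs).dist x y := hreach.pos_dist_of_ne hxy
  obtain ⟨p, hp⟩ := hreach.exists_walk_length_eq_dist
  have hlb := dist_lower p
  rw [hp] at hlb
  omega

lemma ecc_eq (hpos : ∀ i : Fin cs.length, 0 < cs.get i) (h2 : 2 ≤ cs.length)
    (v : (i : Fin cs.length) × Fin (cs.get i)) :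
    ecc (seqCompleteJoin cs) v = max v.1.1 (cs.length - 1 - v.1.1) := by
  have hv := v.1.isLt
  apply le_antisymm
  · apply Finset.sup_le
    intro u _
    rw [dist_eq hpos]
    have hu := u.1.isLt
    split_ifs
    · omega
    · simp only [Nat.dist]; omega
  · rw [max_le_iff]
    constructor
    · rcases Nat.eq_zero_or_pos v.1.1 with h0 | h0
      · omega
      · have hlt : (0 : ℕ) < cs.length := by omega
        let u : (i : Fin cs.length) × Fin (cs.get i) := ⟨⟨0, hlt⟩, ⟨0, hpos _⟩⟩
        have this : (seqCompleteJoin cs).dist v u ≤ ecc (seqCompleteJoin cs) v :=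
          Finset.le_sup (Finset.mem_univ u)
        rw [dist_eq hpos v u, if_neg (show v ≠ u from ne_of_fst_ne (by simp only [u]; omega))] at this
        have hd : Nat.dist v.1.1 u.1.1 = v.1.1 := by simp only [Nat.dist, u]; omega
        rw [hd] at this
        unfold ecc at this ⊢
        omega
    · rcases Nat.eq_zero_or_pos (cs.length - 1 - v.1.1) with h0 | h0
      · omega
      · have hlt : cs.length - 1 < cs.length := by omega
        let u : (i : Fin cs.length) × Fin (cs.get i) := ⟨⟨cs.length - 1, hlt⟩, ⟨0, hpos _⟩⟩
        have this : (seqCompleteJoin cs).dist v u ≤ ecc (seqCompleteJoin cs) v :=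
          Finset.le_sup (Finset.mem_univ u)
        have hne : v ≠ u := ne_of_fst_ne (by simp only [u]; omega)
        rw [dist_eq hpos v u, if_neg hne] at this
        have hd : Nat.dist v.1.1 u.1.1 = cs.length - 1 - v.1.1 := by
          simp only [Nat.dist, u]; omega
        rw [hd] at this
        unfold ecc at this ⊢
        omega



lemma filter_sigma_card {ι : Type*} [Fintype ι] {α : ι → Type*} [∀ i, Fintype (α i)]
    (p : (Σ i, α i) → Prop) :
    (Finset.univ.filter p).card = ∑ i, (Finset.univ.filter fun a : α i => p ⟨i, a⟩).card := by
  rw [← Finset.univ_sigma_univ]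
  rw [show (Finset.univ.sigma fun _ : ι => (Finset.univ : Finset (α _))).filter p
      = Finset.univ.sigma (fun i => Finset.univ.filter fun a : α i => p ⟨i, a⟩) by
    ext ⟨i, a⟩; simp]
  rw [Finset.card_sigma]

lemma mk_eq_mk {i : Fin cs.length} {a b : Fin (cs.get i)} :
    (⟨i, a⟩ : (i : Fin cs.length) × Fin (cs.get i)) = ⟨i, b⟩ ↔ a = b := by
  simp

lemma deg_eq (hpos : ∀ i : Fin cs.length, 0 < cs.get i)
    (v : (i : Fin cs.length) × Fin (cs.get i)) :
    deg (seqCompleteJoin cs) v + 1 =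
      (if v.1.1 = 0 then 0 else cs.getD (v.1.1 - 1) 0) + cs.get v.1 + cs.getD (v.1.1 + 1) 0 := by
  unfold deg
  rw [filter_sigma_card]
  have hsplit : ∀ j : Fin cs.length,
      (Finset.univ.filter fun a : Fin (cs.get j) => (seqCompleteJoin cs).Adj v ⟨j, a⟩).card
      = (if j = v.1 then cs.get v.1 - 1 else 0)
        + (if j.1 + 1 = v.1.1 then cs.get j else 0)
        + (if j.1 = v.1.1 + 1 then cs.get j else 0) := by
    intro j
    by_cases hj : j = v.1
    · subst hj
      rw [if_pos rfl, if_neg (by omega), if_neg (by omega)]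
      have hset : (Finset.univ.filter fun a : Fin (cs.get v.1) => (seqCompleteJoin cs).Adj v ⟨v.1, a⟩)
          = Finset.univ.erase v.2 := by
        ext a
        simp only [Finset.mem_filter, Finset.mem_univ, true_and, Finset.mem_erase, and_true,
          adj_iff, ne_eq]
        constructor
        · rintro ⟨hne, -⟩
          intro h
          exact hne (by rw [h])
        · intro ha
          refine ⟨fun h => ha ?_, Or.inl trivial⟩
          have h2 : (⟨v.1, v.2⟩ : (i : Fin cs.length) × Fin (cs.get i)) = ⟨v.1, a⟩ := by
            rw [← h]
          exact (mk_eq_mk.mp h2).symm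
      rw [hset, Finset.card_erase_of_mem (Finset.mem_univ _), Finset.card_univ, Fintype.card_fin]
      omega
    · have hjj : j.1 ≠ v.1.1 := fun h => hj (Fin.ext h)
      have hne : ∀ a : Fin (cs.get j), v ≠ ⟨j, a⟩ := by
        intro a he
        exact hjj (congrArg (fun x => x.1.1) he).symm
      by_cases h1 : j.1 + 1 = v.1.1
      · rw [if_neg hj, if_pos h1, if_neg (by omega)]
        have hset : (Finset.univ.filter fun a : Fin (cs.get j) => (seqCompleteJoin cs).Adj v ⟨j, a⟩)
            = Finset.univ := by
          ext a
          simp only [Finset.mem_filter, Finset.mem_univ, true_and, iff_true, adj_iff]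
          exact ⟨hne a, by omega⟩
        rw [hset, Finset.card_univ, Fintype.card_fin]
        omega
      · by_cases h2 : j.1 = v.1.1 + 1
        · rw [if_neg hj, if_neg h1, if_pos h2]
          have hset : (Finset.univ.filter fun a : Fin (cs.get j) => (seqCompleteJoin cs).Adj v ⟨j, a⟩)
              = Finset.univ := by
            ext a
            simp only [Finset.mem_filter, Finset.mem_univ, true_and, iff_true, adj_iff]
            exact ⟨hne a, by omega⟩
          rw [hset, Finset.card_univ, Fintype.card_fin]
          omega
        · rw [if_neg hj, if_neg h1, if_neg h2]
          have hset : (Finset.univ.filter fun a : Fin (cs.get j) => (seqCompleteJoin cs).Adj v ⟨j, a⟩)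
              = ∅ := by
            ext a
            simp only [Finset.mem_filter, Finset.mem_univ, true_and, Finset.notMem_empty,
              iff_false, adj_iff]
            rintro ⟨-, h⟩
            omega
          rw [hset]
          simp
  rw [Finset.sum_congr rfl fun j _ => hsplit j]
  rw [Finset.sum_add_distrib, Finset.sum_add_distrib]
  rw [Finset.sum_ite_eq' Finset.univ v.1 (fun _ => cs.get v.1 - 1)]
  rw [if_pos (Finset.mem_univ _)]
  have h2 : (∑ j : Fin cs.length, if j.1 + 1 = v.1.1 then cs.get j else 0)
      = if v.1.1 = 0 then 0 else cs.getD (v.1.1 - 1) 0 := by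
    by_cases h0 : v.1.1 = 0
    · rw [if_pos h0]
      exact Finset.sum_eq_zero fun j _ => if_neg (by omega)
    · rw [if_neg h0]
      have hlt : v.1.1 - 1 < cs.length := by have := v.1.isLt; omega
      rw [Finset.sum_eq_single (⟨v.1.1 - 1, hlt⟩ : Fin cs.length)]
      · rw [if_pos (by simp; omega)]
        rw [List.getD_eq_getElem _ _ hlt]
        rfl
      · intro j _ hj
        exact if_neg fun h => hj (Fin.ext (by simp only [] at h ⊢; omega))
      · intro h; exact absurd (Finset.mem_univ _) h
  have h3 : (∑ j : Fin cs.length, if j.1 = v.1.1 + 1 then cs.get j else 0)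
      = cs.getD (v.1.1 + 1) 0 := by
    by_cases hlt : v.1.1 + 1 < cs.length
    · rw [Finset.sum_eq_single (⟨v.1.1 + 1, hlt⟩ : Fin cs.length)]
      · rw [if_pos rfl, List.getD_eq_getElem _ _ hlt]
        rfl
      · intro j _ hj
        exact if_neg fun h => hj (Fin.ext h)
      · intro h; exact absurd (Finset.mem_univ _) h
    · rw [List.getD_eq_default _ _ (by omega)]
      exact Finset.sum_eq_zero fun j _ => if_neg (by have := j.isLt; omega)
  rw [h2, h3]
  have hc := hpos v.1
  omega

lemma cei_eq (hpos : ∀ i : Fin cs.length, 0 < cs.get i) (h2 : 2 ≤ cs.length) :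
    cei (seqCompleteJoin cs) = ∑ i : Fin cs.length, (cs.get i : ℝ) *
      ((((if i.1 = 0 then 0 else cs.getD (i.1 - 1) 0) + cs.get i + cs.getD (i.1 + 1) 0 - 1 : ℕ) : ℝ)
        / ((max i.1 (cs.length - 1 - i.1) : ℕ) : ℝ)) := by
  unfold cei
  rw [← Finset.univ_sigma_univ, Finset.sum_sigma]
  refine Finset.sum_congr rfl fun i _ => ?_
  have hterm : ∀ a : Fin (cs.get i),
      (deg (seqCompleteJoin cs) ⟨i, a⟩ : ℝ) / (ecc (seqCompleteJoin cs) ⟨i, a⟩ : ℝ)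
      = (((if i.1 = 0 then 0 else cs.getD (i.1 - 1) 0) + cs.get i + cs.getD (i.1 + 1) 0 - 1 : ℕ) : ℝ)
        / ((max i.1 (cs.length - 1 - i.1) : ℕ) : ℝ) := by
    intro a
    have hd := deg_eq hpos ⟨i, a⟩
    have he := ecc_eq hpos h2 ⟨i, a⟩
    simp only [] at hd he
    rw [he]
    congr 1
    norm_cast
    omega
  rw [Finset.sum_congr rfl fun a _ => hterm a]
  rw [Finset.sum_const, Finset.card_univ, Fintype.card_fin, nsmul_eq_mul]



/-- The size of part `i` in the list `[1] ++ replicate m k ++ [s+1,t+1] ++ replicate m k ++ [1]`. -/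
def sz (m k s t i : ℕ) : ℕ :=
  if i = 0 then 1 else if i ≤ m then k else if i = m + 1 then s + 1
  else if i = m + 2 then t + 1 else if i ≤ 2 * m + 2 then k
  else if i = 2 * m + 3 then 1 else 0

lemma getD_replicate (k m i : ℕ) :
    (List.replicate m k).getD i 0 = if i < m then k else 0 := by
  split_ifs with h
  · rw [List.getD_eq_getElem _ _ (by simpa using h), List.getElem_replicate]
  · exact List.getD_eq_default _ _ (by simpa using h)

set_option maxHeartbeats 1600000 in
lemma getD_cs (m k s t i : ℕ) :
    ([1] ++ List.replicate m k ++ [s+1, t+1] ++ List.replicate m k ++ [1] : List ℕ).getD i 0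
      = sz m k s t i := by
  have l1 : ([1] ++ List.replicate m k : List ℕ).length = m + 1 := by simp
  have l2 : ([1] ++ List.replicate m k ++ [s+1, t+1] : List ℕ).length = m + 3 := by
    simp only [List.length_append, List.length_replicate, List.length_cons, List.length_nil]
    omega
  have l3 : ([1] ++ List.replicate m k ++ [s+1, t+1] ++ List.replicate m k : List ℕ).length
      = 2 * m + 3 := by
    simp only [List.length_append, List.length_replicate, List.length_cons, List.length_nil]
    omega
  by_cases h3 : i < 2 * m + 3
  · rw [List.getD_append _ _ _ _ (l3.symm ▸ h3)]
    by_cases h2 : i < m + 3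
    · rw [List.getD_append _ _ _ _ (l2.symm ▸ h2)]
      by_cases h1 : i < m + 1
      · rw [List.getD_append _ _ _ _ (l1.symm ▸ h1)]
        by_cases h0 : i < 1
        · have hi : i = 0 := by omega
          subst hi
          rw [List.getD_append _ _ _ _ (by simp)]
          simp [sz]
        · rw [List.getD_append_right _ _ _ _ (show ([1] : List ℕ).length ≤ i by
            simpa using (by omega : 1 ≤ i))]
          have e1 : i - ([1] : List ℕ).length = i - 1 := rfl
          rw [e1, getD_replicate]
          unfold sz
          split_ifs <;> first | exact (False.elim ‹False›) | omega
      · rw [List.getD_append_right _ _ _ _ (by rw [l1]; omega), l1]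
        rcases (by omega : i = m + 1 ∨ i = m + 2) with h | h
        · subst h
          have e : m + 1 - (m + 1) = 0 := by omega
          rw [e]
          have e' : ([s+1, t+1] : List ℕ).getD 0 0 = s + 1 := rfl
          rw [e']
          unfold sz
          split_ifs <;> first | exact (False.elim ‹False›) | omega
        · subst h
          have e : m + 2 - (m + 1) = 1 := by omega
          rw [e]
          have e' : ([s+1, t+1] : List ℕ).getD 1 0 = t + 1 := rfl
          rw [e']
          unfold sz
          split_ifs <;> first | exact (False.elim ‹False›) | omega
    · rw [List.getD_append_right _ _ _ _ (by rw [l2]; omega), l2, getD_replicate]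
      unfold sz
      split_ifs <;> first | exact (False.elim ‹False›) | omega
  · rw [List.getD_append_right _ _ _ _ (by rw [l3]; omega), l3]
    by_cases h4 : i = 2 * m + 3
    · subst h4
      have e : 2 * m + 3 - (2 * m + 3) = 0 := by omega
      rw [e]
      have e' : ([1] : List ℕ).getD 0 0 = 1 := rfl
      rw [e']
      unfold sz
      split_ifs <;> first | exact (False.elim ‹False›) | omega
    · rw [List.getD_eq_default _ _ (by simpa using (by omega : 1 ≤ i - (2 * m + 3)))]
      unfold sz
      split_ifs <;> first | exact (False.elim ‹False›) | omega

/-- The summand of the cei as a function of the part index. -/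
noncomputable def Tm (m k s t i : ℕ) : ℝ :=
  (sz m k s t i : ℝ) *
    ((((if i = 0 then 0 else sz m k s t (i - 1)) + sz m k s t i + sz m k s t (i + 1) - 1 : ℕ) : ℝ)
      / ((max i (2 * m + 3 - i) : ℕ) : ℝ))

lemma key (m k s t : ℕ) (hk : 0 < k) :
    cei (seqCompleteJoin ([1] ++ List.replicate m k ++ [s+1, t+1] ++ List.replicate m k ++ [1]))
      = ∑ i ∈ Finset.range (2 * m + 4), Tm m k s t i := by
  set cs : List ℕ := [1] ++ List.replicate m k ++ [s+1, t+1] ++ List.replicate m k ++ [1] with hcs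
  have hlen : cs.length = 2 * m + 4 := by
    rw [hcs]
    simp only [List.length_append, List.length_replicate, List.length_cons, List.length_nil]
    omega
  have hgetD : ∀ n : ℕ, cs.getD n 0 = sz m k s t n := by
    intro n
    rw [hcs]
    exact getD_cs m k s t n
  have hget : ∀ i : Fin cs.length, cs.get i = sz m k s t i.1 := by
    intro i
    rw [List.get_eq_getElem, ← List.getD_eq_getElem _ 0 i.isLt, hgetD]
  have hpos : ∀ i : Fin cs.length, 0 < cs.get i := by
    intro i
    rw [hget]
    have h : (i : ℕ) < 2 * m + 4 := by have := i.isLt; omega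
    unfold sz
    split_ifs <;> first | exact (False.elim ‹False›) | omega
  rw [cei_eq hpos (by omega)]
  have hterm : ∀ i : Fin cs.length,
      (cs.get i : ℝ) *
        ((((if i.1 = 0 then 0 else cs.getD (i.1 - 1) 0) + cs.get i + cs.getD (i.1 + 1) 0 - 1 : ℕ) : ℝ)
          / ((max i.1 (cs.length - 1 - i.1) : ℕ) : ℝ)) = Tm m k s t i.1 := by
    intro i
    rw [hget, hgetD, hgetD]
    have hmax : cs.length - 1 - (i : ℕ) = 2 * m + 3 - (i : ℕ) := by omega
    rw [hmax]
    unfold Tm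
    rfl
  rw [Finset.sum_congr rfl fun i _ => hterm i]
  rw [Fin.sum_univ_eq_sum_range (fun i => Tm m k s t i) cs.length, hlen]



lemma sz_congr (m k s t s' t' j : ℕ) (h1 : j ≠ m + 1) (h2 : j ≠ m + 2) :
    sz m k s t j = sz m k s' t' j := by
  unfold sz
  split_ifs <;> first | exact (False.elim ‹False›) | omega

set_option maxHeartbeats 1600000 in
lemma quad_eval (m k s t : ℕ) (hk : 0 < k) :
    Tm m k s t m + (Tm m k s t (m+1) + (Tm m k s t (m+2) + Tm m k s t (m+3)))
      = ((((if m = 0 then 1 else k) * (2 * (if m = 0 then 0 else if m = 1 then 1 else k)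
            + 2 * (if m = 0 then 1 else k) + (s + t))) : ℕ) : ℝ) / ((m : ℝ) + 3)
        + ((((s + t + 2) * ((if m = 0 then 1 else k) + (s + t) + 1)) : ℕ) : ℝ) / ((m : ℝ) + 2) := by
  set a := if m = 0 then 1 else k with ha
  set b := if m = 0 then 0 else if m = 1 then 1 else k with hb
  have ha1 : 1 ≤ a := by rw [ha]; split_ifs <;> omega
  have h_m : sz m k s t m = a := by
    rw [ha]; unfold sz; split_ifs <;> first | exact (False.elim ‹False›) | omega
  have h_m1 : sz m k s t (m+1) = s + 1 := by
    unfold sz; split_ifs <;> first | exact (False.elim ‹False›) | omega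
  have h_m2 : sz m k s t (m+2) = t + 1 := by
    unfold sz; split_ifs <;> first | exact (False.elim ‹False›) | omega
  have h_m3 : sz m k s t (m+3) = a := by
    rw [ha]; unfold sz; split_ifs <;> first | exact (False.elim ‹False›) | omega
  have h_m4 : sz m k s t (m+4) = b := by
    rw [hb]; unfold sz; split_ifs <;> first | exact (False.elim ‹False›) | omega
  have h_lf : (if m = 0 then 0 else sz m k s t (m-1)) = b := by
    rw [hb]
    by_cases hm : m = 0
    · rw [if_pos hm, if_pos hm]
    · rw [if_neg hm, if_neg hm]
      unfold sz
      split_ifs <;> first | exact (False.elim ‹False›) | omega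
  unfold Tm
  have i1 : m + 1 + 1 = m + 2 := rfl
  have i2 : m + 2 + 1 = m + 3 := rfl
  have i3 : m + 3 + 1 = m + 4 := rfl
  rw [i1, i2, i3]
  have e1 : (if m + 1 = 0 then 0 else sz m k s t (m + 1 - 1)) = a := by
    rw [if_neg (by omega)]; exact h_m
  have e2 : (if m + 2 = 0 then 0 else sz m k s t (m + 2 - 1)) = s + 1 := by
    rw [if_neg (by omega)]; exact h_m1
  have e3 : (if m + 3 = 0 then 0 else sz m k s t (m + 3 - 1)) = t + 1 := by
    rw [if_neg (by omega)]; exact h_m2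
  rw [e1, e2, e3, h_m, h_m1, h_m2, h_m3, h_m4, h_lf]
  have d1 : max m (2 * m + 3 - m) = m + 3 := by omega
  have d2 : max (m+1) (2 * m + 3 - (m+1)) = m + 2 := by omega
  have d3 : max (m+2) (2 * m + 3 - (m+2)) = m + 2 := by omega
  have d4 : max (m+3) (2 * m + 3 - (m+3)) = m + 3 := by omega
  rw [d1, d2, d3, d4]
  have n1 : b + a + (s + 1) - 1 = b + a + s := by omega
  have n2 : a + (s + 1) + (t + 1) - 1 = a + s + t + 1 := by omega
  have n3 : s + 1 + (t + 1) + a - 1 = a + s + t + 1 := by omega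
  have n4 : t + 1 + a + b - 1 = b + a + t := by omega
  rw [n1, n2, n3, n4]
  push_cast
  ring

lemma sum_T_eq (m k s t s' t' : ℕ) (hk : 0 < k) (h : s + t = s' + t') :
    ∑ i ∈ Finset.range (2*m+4), Tm m k s t i
      = ∑ i ∈ Finset.range (2*m+4), Tm m k s' t' i := by
  have hsub : ({m, m+1, m+2, m+3} : Finset ℕ) ⊆ Finset.range (2*m+4) := by
    intro x hx
    simp only [Finset.mem_insert, Finset.mem_singleton] at hx
    rw [Finset.mem_range]
    omega
  rw [← Finset.sum_sdiff hsub, ← Finset.sum_sdiff hsub]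
  have h1 : ∀ s t : ℕ, ∑ i ∈ ({m, m+1, m+2, m+3} : Finset ℕ), Tm m k s t i
      = Tm m k s t m + (Tm m k s t (m+1) + (Tm m k s t (m+2) + Tm m k s t (m+3))) := by
    intro s t
    rw [Finset.sum_insert (by simp only [Finset.mem_insert, Finset.mem_singleton]; omega),
        Finset.sum_insert (by simp only [Finset.mem_insert, Finset.mem_singleton]; omega),
        Finset.sum_insert (by simp only [Finset.mem_singleton]; omega),
        Finset.sum_singleton]
  rw [h1, h1, quad_eval m k s t hk, quad_eval m k s' t' hk, h]
  congr 1
  apply Finset.sum_congr rfl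
  intro i hi
  simp only [Finset.mem_sdiff, Finset.mem_range, Finset.mem_insert, Finset.mem_singleton] at hi
  obtain ⟨-, hne⟩ := hi
  push_neg at hne
  obtain ⟨g1, g2, g3, g4⟩ := hne
  unfold Tm
  rw [sz_congr m k s t s' t' i g2 g3,
      sz_congr m k s t s' t' (i + 1) (by omega) (by omega),
      sz_congr m k s t s' t' (i - 1) (by omega) (by omega)]

/-- all graphs in the family `H(n,k,d)` (for odd `d ≥ 3`) have the
same connective eccentricity index. -/
theorem cei_eq_of_mem_H (k d n s t s' t' : ℕ)
    (hk : 1 ≤ k) (hd : 3 ≤ d) (hdo : Odd d) (hn : k * (d - 1) + 2 ≤ n)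
    (hs : k - 1 ≤ s) (ht : k - 1 ≤ t) (hs' : k - 1 ≤ s') (ht' : k - 1 ≤ t')
    (hst : s + t + k * d + 4 = n + 3 * k) (hst' : s' + t' + k * d + 4 = n + 3 * k) :
    cei (seqCompleteJoin ([1] ++ List.replicate ((d - 3) / 2) k ++ [s + 1, t + 1] ++
        List.replicate ((d - 3) / 2) k ++ [1])) =
    cei (seqCompleteJoin ([1] ++ List.replicate ((d - 3) / 2) k ++ [s' + 1, t' + 1] ++
        List.replicate ((d - 3) / 2) k ++ [1])) := by
  rw [key ((d - 3) / 2) k s t hk, key ((d - 3) / 2) k s' t' hk]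
  exact sum_T_eq _ _ _ _ _ _ hk (by omega)
end CEI
end

section
/- Let k ≥ 1, d ≥ 3, n ≥ k(d-1)+2, and let G attain the maximum connective eccentricity index among all k-connected graphs of order n with diameter d. Let u_0 u_1 ⋯ u_d be a diametral path in G and A_i = {v ∈ V(G) : d_G(v, u_0) = i} for 0 ≤ i ≤ d. Then for every i ∈ {1, …, d}, the induced subgraphs G[A_i] and G[A_{i-1} ∪ A_i] are complete graphs. -/
open Finset
open scoped Classical

namespace CEI

variable {V : Type*}

/-- if `G` maximizes the CEI among `k`-connected graphs of order `n`
with diameter `d`, `u₀ u₁ ⋯ u_d` is a diametral path and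
`Aᵢ = {v : d_G(u₀,v) = i}`, then `G[Aᵢ]` and `G[Aᵢ₋₁ ∪ Aᵢ]` are complete for all
`1 ≤ i ≤ d`. -/
theorem level_sets_complete {V : Type} [Fintype V] (G : SimpleGraph V) (k d n : ℕ)
    (hk : 1 ≤ k) (hd : 3 ≤ d) (hn : k * (d - 1) + 2 ≤ n)
    (hcard : Fintype.card V = n) (hconn : KConnected k G) (hdiam : diam G = d)
    (hmax : ∀ (W : Type) [Fintype W] (H : SimpleGraph W),
      Fintype.card W = n → KConnected k H → diam H = d → cei H ≤ cei G)
    (u0 ud : V) (p : G.Walk u0 ud) (hp : p.IsPath) (hplen : p.length = d)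
    (hdist : G.dist u0 ud = d) :
    ∀ i, 1 ≤ i → i ≤ d →
      {v | G.dist u0 v = i}.Pairwise G.Adj ∧
      ({v | G.dist u0 v = i - 1} ∪ {v | G.dist u0 v = i}).Pairwise G.Adj := by
  -- basic facts
  have hk2 : 2 ≤ k * (d - 1) := by
    calc 2 = 1 * 2 := by ring
    _ ≤ k * (d - 1) := Nat.mul_le_mul hk (by omega)
  have hcard2 : 1 < Fintype.card V := by omega
  -- G is connected
  have Gconn : G.Connected := by
    have h0 := hconn ∅ (by rw [Finset.card_empty]; omega)
    have he : (((∅ : Finset V) : Set V))ᶜ = Set.univ := by simp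
    rw [he] at h0
    exact (SimpleGraph.induceUnivIso G).connected_iff.mp h0.1
  set f : V → ℕ := fun v => G.dist u0 v with hf
  -- key exchange lemma
  have key : ∀ x y : V, x ≠ y →
      (f x = f y ∨ f x + 1 = f y ∨ f y + 1 = f x) → G.Adj x y := by
    intro x y hne hlev
    by_contra hxy
    -- the graph with the edge x-y added
    set G' : SimpleGraph V :=
      { Adj := fun a b => G.Adj a b ∨ (a = x ∧ b = y) ∨ (a = y ∧ b = x)
        symm := ⟨fun a b h => by
          rcases h with h | h | h
          · exact Or.inl h.symm
          · exact Or.inr (Or.inr ⟨h.2, h.1⟩)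
          · exact Or.inr (Or.inl ⟨h.2, h.1⟩)⟩
        loopless := ⟨fun a h => by
          rcases h with h | h | h
          · exact G.irrefl h
          · exact hne (h.1.symm.trans h.2)
          · exact hne (h.2.symm.trans h.1)⟩ } with hG'
    have hle : G ≤ G' := fun a b h => Or.inl h
    have G'conn : G'.Connected := Gconn.mono hle
    have hdist_le : ∀ v u : V, G'.dist v u ≤ G.dist v u := fun v u =>
      (Gconn.preconnected v u).dist_anti hle
    -- every G'-edge changes level by at most 1
    have hstep : ∀ a b : V, G'.Adj a b → f b ≤ f a + 1 := by
      intro a b hab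
      rcases hab with hab | ⟨ha, hb⟩ | ⟨ha, hb⟩
      · have h1 : G.dist a b = 1 := SimpleGraph.dist_eq_one_iff_adj.mpr hab
        have h2 := Gconn.dist_triangle (u := u0) (v := a) (w := b)
        simp only [hf]
        omega
      · subst ha; subst hb; omega
      · subst ha; subst hb; omega
    have hwalk : ∀ {a b : V} (q : G'.Walk a b), f b ≤ f a + q.length := by
      intro a b q
      induction q with
      | nil => simp
      | cons h q ih =>
        have := hstep _ _ h
        simp only [SimpleGraph.Walk.length_cons]
        omega
    have hfud : f ud = d := hdist
    have hfu0 : f u0 = 0 := by simp [hf]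
    -- distance from u0 to ud in G' is still d
    have hd' : G'.dist u0 ud = d := by
      refine le_antisymm (by rw [← hdist]; exact hdist_le u0 ud) ?_
      obtain ⟨q, hq⟩ := (G'conn.preconnected u0 ud).exists_walk_length_eq_dist
      have := hwalk q
      omega
    -- eccentricity comparisons
    have hecc_le : ∀ v : V, ecc G' v ≤ ecc G v := by
      intro v
      exact Finset.sup_mono_fun fun u _ => hdist_le v u
    have heccd : ∀ v : V, ecc G v ≤ d := by
      intro v
      rw [← hdiam]
      exact Finset.le_sup (Finset.mem_univ v)
    have hecc'_pos : ∀ v : V, 1 ≤ ecc G' v := by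
      intro v
      obtain ⟨u, hu⟩ := Fintype.exists_ne_of_one_lt_card hcard2 v
      have h1 : 1 ≤ G'.dist v u := G'conn.pos_dist_of_ne (Ne.symm hu)
      exact le_trans h1 (Finset.le_sup (Finset.mem_univ u))
    have hecc_pos : ∀ v : V, 1 ≤ ecc G v := fun v =>
      le_trans (hecc'_pos v) (hecc_le v)
    -- diameter of G' is d
    have hdiam' : diam G' = d := by
      refine le_antisymm (Finset.sup_le fun v _ => le_trans (hecc_le v) (heccd v)) ?_
      have h1 : d ≤ ecc G' u0 := by
        rw [← hd']
        exact Finset.le_sup (Finset.mem_univ ud)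
      exact le_trans h1 (Finset.le_sup (Finset.mem_univ u0))
    -- G' is k-connected
    have hconn' : KConnected k G' := by
      intro A hA
      obtain ⟨h1, h2⟩ := hconn A hA
      refine ⟨h1.mono fun a b hab => hle hab, h2⟩
    -- degree comparisons
    have hdeg_le : ∀ v : V, deg G v ≤ deg G' v := by
      intro v
      apply Finset.card_le_card
      intro u hu
      simp only [Finset.mem_filter, Finset.mem_univ, true_and] at hu ⊢
      exact hle hu
    have hdegx : deg G x + 1 ≤ deg G' x := by
      have hset : insert y (Finset.univ.filter fun u => G.Adj x u) ⊆
          Finset.univ.filter fun u => G'.Adj x u := by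
        intro u hu
        simp only [Finset.mem_insert, Finset.mem_filter, Finset.mem_univ, true_and] at hu ⊢
        rcases hu with rfl | hu
        · exact Or.inr (Or.inl ⟨rfl, rfl⟩)
        · exact Or.inl hu
      have hnotmem : y ∉ Finset.univ.filter fun u => G.Adj x u := by
        simp [hxy]
      calc deg G x + 1 = (insert y (Finset.univ.filter fun u => G.Adj x u)).card := by
            rw [deg, Finset.card_insert_of_notMem hnotmem]
      _ ≤ _ := by
            rw [deg]
            apply Finset.card_le_card
            intro u hu
            have h := hset hu
            simp only [Finset.mem_filter, Finset.mem_univ, true_and] at h ⊢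
            exact h
    -- CEI strictly increases
    have hcei : cei G < cei G' := by
      apply Finset.sum_lt_sum
      · intro v _
        have h1 : (0 : ℝ) < (ecc G' v : ℝ) := by
          exact_mod_cast hecc'_pos v
        have h2 : (ecc G' v : ℝ) ≤ (ecc G v : ℝ) := by exact_mod_cast hecc_le v
        have h3 : (deg G v : ℝ) ≤ (deg G' v : ℝ) := by exact_mod_cast hdeg_le v
        have h4 : (0 : ℝ) ≤ (deg G v : ℝ) := Nat.cast_nonneg _
        exact div_le_div₀ (Nat.cast_nonneg _) h3 h1 h2
      · refine ⟨x, Finset.mem_univ x, ?_⟩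
        have h1 : (0 : ℝ) < (ecc G' x : ℝ) := by exact_mod_cast hecc'_pos x
        have h2 : (ecc G' x : ℝ) ≤ (ecc G x : ℝ) := by exact_mod_cast hecc_le x
        have h3 : (deg G x : ℝ) + 1 ≤ (deg G' x : ℝ) := by exact_mod_cast hdegx
        have h4 : (0 : ℝ) ≤ (deg G x : ℝ) := Nat.cast_nonneg _
        have h5 : (deg G x : ℝ) < (deg G' x : ℝ) := by linarith
        exact div_lt_div₀ h5 h2 (Nat.cast_nonneg _) h1
    exact absurd (hmax V G' hcard hconn' hdiam') (not_le.mpr hcei)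
  -- conclude
  intro i hi1 hid
  have hunion : ({v | G.dist u0 v = i - 1} ∪ {v | G.dist u0 v = i}).Pairwise G.Adj := by
    intro a ha b hb hab
    apply key a b hab
    simp only [Set.mem_union, Set.mem_setOf_eq] at ha hb
    simp only [hf]
    omega
  exact ⟨hunion.mono Set.subset_union_right, hunion⟩
end CEI
end

section
/- Let k ≥ 1, d ≥ 3, n ≥ k(d-1)+2, and let G attain the maximum connective eccentricity index among all k-connected graphs of order n with diameter d. Let u_0 u_1 ⋯ u_d be a diametral path in G and A_d = {v ∈ V(G) : d_G(v, u_0) = d}. Then |A_d| = 1. -/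
open Finset
open scoped Classical

namespace CEI

variable {V : Type*}

section Aux

variable {V : Type} [Fintype V]

/-- The graph `G` together with the extra edge `xy`. -/
def addE (G : SimpleGraph V) (x y : V) : SimpleGraph V where
  Adj a b := G.Adj a b ∨ (a ≠ b ∧ ((a = x ∧ b = y) ∨ (a = y ∧ b = x)))
  symm := by constructor; rintro a b (h | ⟨hne, h⟩); · exact Or.inl h.symm
             · exact Or.inr ⟨hne.symm, by tauto⟩
  loopless := by constructor; rintro a (h | ⟨hne, _⟩); · exact G.irrefl h
                 · exact hne rfl

lemma addE_le (G : SimpleGraph V) (x y : V) : G ≤ addE G x y := fun _ _ h => Or.inl h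

lemma dist_mono {G H : SimpleGraph V} (hle : G ≤ H) {a b : V} (hr : G.Reachable a b) :
    H.dist a b ≤ G.dist a b := by
  obtain ⟨p, hp⟩ := hr.exists_walk_length_eq_dist
  have := SimpleGraph.dist_le (p.mapLe hle)
  rwa [SimpleGraph.Walk.length_map, hp] at this

lemma walk_mid {G : SimpleGraph V} {a b : V} (p : G.Walk a b) (i : ℕ) (hi : i ≤ p.length) :
    ∃ (q : V) (w1 : G.Walk a q) (w2 : G.Walk q b), w1.length ≤ i ∧ w2.length + i ≤ p.length := by
  induction p generalizing i with
  | nil =>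
    refine ⟨_, .nil, .nil, ?_, ?_⟩ <;> simp_all
  | cons h p' ih =>
    match i with
    | 0 => exact ⟨_, .nil, .cons h p', by simp, by simp⟩
    | j + 1 =>
      obtain ⟨q, w1, w2, h1, h2⟩ := ih j (by simp at hi ⊢; omega)
      exact ⟨q, .cons h w1, w2, by simp; omega, by simp; omega⟩

lemma addE_walk_lb {G : SimpleGraph V} (hG : G.Connected) {x y : V} :
    ∀ {a b : V} (p : (addE G x y).Walk a b),
    min (G.dist a b) (min (G.dist a x + 1 + G.dist y b) (G.dist a y + 1 + G.dist x b))
      ≤ p.length := by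
  intro a b p
  induction p with
  | nil =>
    simp [SimpleGraph.dist_self]
  | @cons a c b h p' ih =>
    rw [SimpleGraph.Walk.length_cons]
    rcases h with hA | ⟨hne, ⟨h1, h2⟩ | ⟨h1, h2⟩⟩
    · have hd1 : G.dist a c = 1 := SimpleGraph.dist_eq_one_iff_adj.mpr hA
      have t1 : G.dist a b ≤ G.dist a c + G.dist c b := hG.dist_triangle
      have t2 : G.dist a x ≤ G.dist a c + G.dist c x := hG.dist_triangle
      have t3 : G.dist a y ≤ G.dist a c + G.dist c y := hG.dist_triangle
      omega
    · have e1 : G.dist a x = 0 := by rw [h1, SimpleGraph.dist_self]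
      have e2 : G.dist c y = 0 := by rw [h2, SimpleGraph.dist_self]
      have e3 : G.dist c b = G.dist y b := by rw [h2]
      have e4 : G.dist x b = G.dist a b := by rw [h1]
      have e5 : G.dist c x = G.dist a y := by rw [h1, h2, SimpleGraph.dist_comm]
      omega
    · have e1 : G.dist a y = 0 := by rw [h1, SimpleGraph.dist_self]
      have e2 : G.dist c x = 0 := by rw [h2, SimpleGraph.dist_self]
      have e3 : G.dist c b = G.dist x b := by rw [h2]
      have e4 : G.dist y b = G.dist a b := by rw [h1]
      have e5 : G.dist c y = G.dist a x := by rw [h1, h2, SimpleGraph.dist_comm]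
      omega

lemma addE_dist_ge {G : SimpleGraph V} (hG : G.Connected) (x y a b : V) :
    min (G.dist a b) (min (G.dist a x + 1 + G.dist y b) (G.dist a y + 1 + G.dist x b))
      ≤ (addE G x y).dist a b := by
  have hr : (addE G x y).Reachable a b := (hG a b).mono (addE_le G x y)
  obtain ⟨p, hp⟩ := hr.exists_walk_length_eq_dist
  rw [← hp]
  exact addE_walk_lb hG p

lemma ecc_le_diam (G : SimpleGraph V) (v : V) : ecc G v ≤ diam G :=
  Finset.le_sup (Finset.mem_univ v)

lemma dist_le_ecc (G : SimpleGraph V) (v u : V) : G.dist v u ≤ ecc G v :=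
  Finset.le_sup (Finset.mem_univ u)

lemma cei_lt_addE {G : SimpleGraph V} (hG : G.Connected) (h2 : 1 < Fintype.card V)
    {x y : V} (hxy : x ≠ y) (hnadj : ¬ G.Adj x y) : cei G < cei (addE G x y) := by
  have hle : G ≤ addE G x y := addE_le G x y
  have hdeg : ∀ v, deg G v ≤ deg (addE G x y) v := fun v =>
    Finset.card_le_card (Finset.monotone_filter_right _ (fun u _ h => hle h))
  have hdegx : deg G x < deg (addE G x y) x := by
    apply Finset.card_lt_card
    refine (Finset.ssubset_iff_of_subset (Finset.monotone_filter_right _ (fun u _ h => hle h))).mpr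
      ⟨y, ?_, ?_⟩
    · exact Finset.mem_filter.mpr ⟨Finset.mem_univ y, Or.inr ⟨hxy, Or.inl ⟨rfl, rfl⟩⟩⟩
    · intro hmem
      exact hnadj (Finset.mem_filter.mp hmem).2
  have hecc : ∀ v, ecc (addE G x y) v ≤ ecc G v := fun v =>
    Finset.sup_mono_fun (fun u _ => dist_mono hle (hG v u))
  have heccpos : ∀ v, 0 < ecc (addE G x y) v := by
    intro v
    obtain ⟨u, hu⟩ := Fintype.exists_ne_of_one_lt_card h2 v
    have hr : (addE G x y).Reachable v u := (hG v u).mono hle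
    have hne : (addE G x y).dist v u ≠ 0 :=
      SimpleGraph.dist_ne_zero_iff_ne_and_reachable.mpr ⟨hu.symm, hr⟩
    exact lt_of_lt_of_le (Nat.pos_of_ne_zero hne) (dist_le_ecc _ v u)
  apply Finset.sum_lt_sum
  · intro i _
    have h1 : (0:ℝ) < ecc (addE G x y) i := by exact_mod_cast heccpos i
    exact div_le_div₀ (by positivity) (by exact_mod_cast hdeg i) h1 (by exact_mod_cast hecc i)
  · refine ⟨x, Finset.mem_univ x, ?_⟩
    have h1 : (0:ℝ) < ecc (addE G x y) x := by exact_mod_cast heccpos x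
    exact div_lt_div₀ (by exact_mod_cast hdegx) (by exact_mod_cast hecc x) (by positivity) h1

/-- If an extra edge can be added without destroying `k`-connectivity or the
diameter, `G` is not maximal. -/
lemma contra {G : SimpleGraph V} (k d n : ℕ) (h2 : 1 < Fintype.card V) (hG : G.Connected)
    (hcard : Fintype.card V = n) (hconn : KConnected k G) (hdiam : diam G = d)
    (hmax : ∀ (W : Type) [Fintype W] (H : SimpleGraph W),
      Fintype.card W = n → KConnected k H → diam H = d → cei H ≤ cei G)
    (x y : V) (hxy : x ≠ y) (hnadj : ¬ G.Adj x y)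
    (t u : V) (ht : (addE G x y).dist t u = d) : False := by
  have hle : G ≤ addE G x y := addE_le G x y
  have hconn' : KConnected k (addE G x y) := by
    intro A hA
    obtain ⟨h1, h3⟩ := hconn A hA
    exact ⟨h1.mono (fun a b h => hle h), h3⟩
  have hecc : ∀ v, ecc (addE G x y) v ≤ ecc G v := fun v =>
    Finset.sup_mono_fun (fun u _ => dist_mono hle (hG v u))
  have hdiam' : diam (addE G x y) = d := by
    apply le_antisymm
    · exact Finset.sup_le fun v _ => (hecc v).trans (hdiam ▸ ecc_le_diam G v)
    · exact ht ▸ (dist_le_ecc (addE G x y) t u).trans (ecc_le_diam _ t)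
  have := hmax V (addE G x y) hcard hconn' hdiam'
  exact absurd this (not_le.mpr (cei_lt_addE hG h2 hxy hnadj))


end Aux

/-- if `G` maximizes the CEI among `k`-connected graphs of order `n`
with diameter `d` and `u₀ u₁ ⋯ u_d` is a diametral path, then
`A_d = {v : d_G(u₀,v) = d}` consists of a single vertex. -/
theorem last_level_set_singleton {V : Type} [Fintype V] (G : SimpleGraph V) (k d n : ℕ)
    (hk : 1 ≤ k) (hd : 3 ≤ d) (hn : k * (d - 1) + 2 ≤ n)
    (hcard : Fintype.card V = n) (hconn : KConnected k G) (hdiam : diam G = d)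
    (hmax : ∀ (W : Type) [Fintype W] (H : SimpleGraph W),
      Fintype.card W = n → KConnected k H → diam H = d → cei H ≤ cei G)
    (u0 ud : V) (p : G.Walk u0 ud) (hp : p.IsPath) (hplen : p.length = d)
    (hdist : G.dist u0 ud = d) :
    {v | G.dist u0 v = d}.ncard = 1 := by
  classical
  have h2 : 1 < Fintype.card V := by
    have h4 : (2:ℕ) ≤ k * (d-1) + 2 := by omega
    omega
  have hG : G.Connected := by
    have h := (hconn ∅ (by simp; omega)).1
    have he : ((↑(∅ : Finset V) : Set V)ᶜ) = (Set.univ : Set V) := by simp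
    rw [he] at h
    exact (SimpleGraph.induceUnivIso G).connected_iff.mp h
  have heccle : ∀ v, ecc G v ≤ d := fun v => hdiam ▸ ecc_le_diam G v
  have hfin : {v | G.dist u0 v = d}.Finite := Set.toFinite _
  have hmemud : ud ∈ {v | G.dist u0 v = d} := hdist
  by_contra hcon
  have h1lt : 1 < {v | G.dist u0 v = d}.ncard := by
    have := (Set.ncard_pos hfin).mpr ⟨ud, hmemud⟩
    omega
  obtain ⟨v, w, hv, hw, hvw⟩ := (Set.one_lt_ncard_iff hfin).mp h1lt
  have hv : G.dist u0 v = d := hv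
  have hw : G.dist u0 w = d := hw
  by_cases hadj : G.Adj v w
  · -- v and w adjacent: add an edge from v to a vertex at distance d-2
    obtain ⟨q, w1, w2, hw1, hw2⟩ := walk_mid p (d-2) (by omega)
    have hq1 : G.dist u0 q ≤ d - 2 := (SimpleGraph.dist_le w1).trans hw1
    have hq2 : G.dist q ud ≤ 2 := by
      have := SimpleGraph.dist_le w2; omega
    have htri : G.dist u0 ud ≤ G.dist u0 q + G.dist q ud := hG.dist_triangle
    have hq : G.dist u0 q = d - 2 := by omega
    have hvq : v ≠ q := by intro h; rw [h] at hv; omega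
    have hnadjvq : ¬ G.Adj v q := by
      intro h
      have ht1 : G.dist u0 v ≤ G.dist u0 q + G.dist q v := hG.dist_triangle
      have ht2 : G.dist q v = 1 := SimpleGraph.dist_eq_one_iff_adj.mpr h.symm
      omega
    refine contra k d n h2 hG hcard hconn hdiam hmax v q hvq hnadjvq u0 w ?_
    apply le_antisymm
    · exact hw ▸ dist_mono (addE_le G v q) (hG u0 w)
    · have hmin := addE_dist_ge hG v q u0 w
      have hvw1 : G.dist v w = 1 := SimpleGraph.dist_eq_one_iff_adj.mpr hadj
      omega
  · -- v and w not adjacent: add the edge vw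
    refine contra k d n h2 hG hcard hconn hdiam hmax v w hvw hadj u0 v ?_
    apply le_antisymm
    · exact hv ▸ dist_mono (addE_le G v w) (hG u0 v)
    · have hmin := addE_dist_ge hG v w u0 v
      have h0 : G.dist v v = 0 := SimpleGraph.dist_self
      omega

end CEI
end
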